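/- arXiv:2103.16232 — 9 statements merged into one kernel-verified Lean document; each statement's English description precedes it below -/
import Mathlib

section
/- For every point z = (W, b₁, b₂, V) in the level set Ω_θ and every index j ∈ {1,…,N₁}, the j-th entry of b₁ satisfies (b₁)_j ≤ θ/λ₁ + √(N₁N₀θ/λ₂) · ‖X‖₁. -/
open scoped BigOperators

noncomputable section

/-- A point `z = (W, b₁, b₂, V)`. -/
abbrev Pt (N N₀ N₁ : ℕ) : Type :=
  Matrix (Fin N₁) (Fin N₀) ℝ × (Fin N₁ → ℝ) × (Fin N₀ → ℝ) × Matrix (Fin N₁) (Fin N) ℝ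

/-- ReLU: positive part. -/
def relu (y : ℝ) : ℝ := max y 0

variable {N N₀ N₁ : ℕ}

/-- squared Euclidean norm of a point `z = (W,b₁,b₂,V)`. -/
def sqnormPt (z : Pt N N₀ N₁) : ℝ :=
  (∑ i, ∑ j, (z.1 i j) ^ 2) + (∑ i, (z.2.1 i) ^ 2) + (∑ j, (z.2.2.1 j) ^ 2)
    + (∑ i, ∑ n, (z.2.2.2 i n) ^ 2)

/-- Euclidean norm of a point. -/
def normPt (z : Pt N N₀ N₁) : ℝ := Real.sqrt (sqnormPt z)

/-- Euclidean distance between points. -/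
def distPt (z z' : Pt N N₀ N₁) : ℝ := normPt (z - z')

/-- `(W xₙ + b₁)ᵢ`. -/
def preact (X : Matrix (Fin N₀) (Fin N) ℝ) (z : Pt N N₀ N₁) (i : Fin N₁) (n : Fin N) : ℝ :=
  (∑ j, z.1 i j * X j n) + z.2.1 i

/-- `(Wᵀ vₙ + b₂)ⱼ`. -/
def outPre (z : Pt N N₀ N₁) (j : Fin N₀) (n : Fin N) : ℝ :=
  (∑ i, z.1 i j * z.2.2.2 i n) + z.2.2.1 j

/-- fidelity term `F(z)`. -/
def Fv (X : Matrix (Fin N₀) (Fin N) ℝ) (z : Pt N N₀ N₁) : ℝ :=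
  (1 / (N : ℝ)) * ∑ n, ∑ j, (relu (outPre z j n) - X j n) ^ 2

/-- regularization term `R(z)`. -/
def Rv (lam₁ lam₂ : ℝ) (z : Pt N N₀ N₁) : ℝ :=
  lam₁ * (∑ n, ∑ i, z.2.2.2 i n) + lam₂ * ∑ i, ∑ j, (z.1 i j) ^ 2

/-- penalty term `P(z)`. -/
def Pv (β : ℝ) (X : Matrix (Fin N₀) (Fin N) ℝ) (z : Pt N N₀ N₁) : ℝ :=
  β * ∑ n, ∑ i, (z.2.2.2 i n - relu (preact X z i n))

/-- objective `O(z) = F(z) + R(z) + P(z)`. -/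
def Ov (lam₁ lam₂ β : ℝ) (X : Matrix (Fin N₀) (Fin N) ℝ) (z : Pt N N₀ N₁) : ℝ :=
  Fv X z + Rv lam₁ lam₂ z + Pv β X z

/-- `Ω₁ = {z : vₙ = (Wxₙ + b₁)₊}`. -/
def Omega1 (X : Matrix (Fin N₀) (Fin N) ℝ) : Set (Pt N N₀ N₁) :=
  {z | ∀ i n, z.2.2.2 i n = relu (preact X z i n)}

/-- `Ω₂ = {z : vₙ ≥ (Wxₙ + b₁)₊}`. -/
def Omega2 (X : Matrix (Fin N₀) (Fin N) ℝ) : Set (Pt N N₀ N₁) :=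
  {z | ∀ i n, relu (preact X z i n) ≤ z.2.2.2 i n}

/-- level set `Ω_θ = {z ∈ Ω₂ : O(z) ≤ θ}` (also used for `Ω_δ`). -/
def OmegaLev (lam₁ lam₂ β θ : ℝ) (X : Matrix (Fin N₀) (Fin N) ℝ) : Set (Pt N N₀ N₁) :=
  {z | z ∈ Omega2 X ∧ Ov lam₁ lam₂ β X z ≤ θ}

/-- `‖X‖₁`: maximum absolute column sum. -/
def Xcol1 (X : Matrix (Fin N₀) (Fin N) ℝ) : ℝ := ⨆ n, ∑ j, |X j n|

/-- the constant `α`. -/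
def alphaC (N N₀ N₁ : ℕ) (lam₁ lam₂ θ : ℝ) (X : Matrix (Fin N₀) (Fin N) ℝ) : ℝ :=
  max (θ / lam₁ + Real.sqrt ((N₁ : ℝ) * (N₀ : ℝ) * θ / lam₂) * Xcol1 X)
      (θ * Real.sqrt ((N₁ : ℝ) * (N₀ : ℝ) * θ) / (lam₁ * Real.sqrt lam₂)
        + Real.sqrt ((N : ℝ) * θ) + Xcol1 X)

/-- `Ω₃ = {z : ‖b₁‖_∞ ≤ α, ‖b₂‖_∞ ≤ α}`. -/
def Omega3 (lam₁ lam₂ θ : ℝ) (X : Matrix (Fin N₀) (Fin N) ℝ) : Set (Pt N N₀ N₁) :=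
  {z | (∀ i, |z.2.1 i| ≤ alphaC N N₀ N₁ lam₁ lam₂ θ X) ∧
       (∀ j, |z.2.2.1 j| ≤ alphaC N N₀ N₁ lam₁ lam₂ θ X)}

/-- `Z = Ω₂ ∩ Ω₃`. -/
def Zset (lam₁ lam₂ θ : ℝ) (X : Matrix (Fin N₀) (Fin N) ℝ) : Set (Pt N N₀ N₁) :=
  Omega2 X ∩ Omega3 lam₁ lam₂ θ X

/-- tangent cone of `C` at `zb`. -/
def TangentCone (C : Set (Pt N N₀ N₁)) (zb : Pt N N₀ N₁) : Set (Pt N N₀ N₁) :=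
  {d | ∃ zs : ℕ → Pt N N₀ N₁, ∃ ts : ℕ → ℝ,
      (∀ k, zs k ∈ C) ∧ (∀ k, 0 < ts k) ∧
      Filter.Tendsto ts Filter.atTop (nhds 0) ∧
      Filter.Tendsto (fun k => distPt (zs k) zb) Filter.atTop (nhds 0) ∧
      Filter.Tendsto (fun k => normPt ((ts k)⁻¹ • (zs k - zb) - d)) Filter.atTop (nhds 0)}

/-- `zb` is a d-stationary point of `f` over `C`:
`liminf_{t↓0} (f(zb + t d) - f(zb))/t ≥ 0` for every tangent direction `d`. -/
def DStationary (f : Pt N N₀ N₁ → ℝ) (C : Set (Pt N N₀ N₁)) (zb : Pt N N₀ N₁) : Prop :=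
  zb ∈ C ∧ ∀ d ∈ TangentCone C zb, ∀ ε : ℝ, 0 < ε → ∃ δ : ℝ, 0 < δ ∧
    ∀ t : ℝ, 0 < t → t < δ → -ε < (f (zb + t • d) - f zb) / t

/-- smoothing function `s_μ` of the ReLU. -/
def smoothRelu (μ y : ℝ) : ℝ :=
  if y < 0 then 0 else if y ≤ μ then y ^ 2 / (2 * μ) else y - μ / 2

/-- smoothed fidelity term `F̃(z, μ)`. -/
def Ftil (X : Matrix (Fin N₀) (Fin N) ℝ) (z : Pt N N₀ N₁) (μ : ℝ) : ℝ :=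
  (1 / (N : ℝ)) * (∑ n, ∑ j, (relu (outPre z j n)) ^ 2)
    + (1 / (N : ℝ)) * (∑ j, ∑ n, (X j n) ^ 2)
    - (2 / (N : ℝ)) * ∑ n, ∑ j, X j n * smoothRelu μ (outPre z j n)

/-- smoothed penalty term `P̃(z, μ)`. -/
def Ptil (β : ℝ) (X : Matrix (Fin N₀) (Fin N) ℝ) (z : Pt N N₀ N₁) (μ : ℝ) : ℝ :=
  β * ∑ n, ∑ i, (z.2.2.2 i n - smoothRelu μ (preact X z i n))

/-- smoothed objective `Õ(z, μ)`. -/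
def Otil (lam₁ lam₂ β : ℝ) (X : Matrix (Fin N₀) (Fin N) ℝ) (z : Pt N N₀ N₁) (μ : ℝ) : ℝ :=
  Ftil X z μ + Ptil β X z μ + Rv lam₁ lam₂ z
theorem stmt1 (N N₀ N₁ : ℕ) (hN : 0 < N) (hN₀ : 0 < N₀) (hN₁ : 0 < N₁)
    (lam₁ lam₂ β θ : ℝ) (hlam₁ : 0 < lam₁) (hlam₂ : 0 < lam₂) (hbeta : 0 < β)
    (X : Matrix (Fin N₀) (Fin N) ℝ)
    (hθ : (1 / (N : ℝ)) * ∑ j, ∑ n, (X j n) ^ 2 < θ)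
    (z : Pt N N₀ N₁) (hz : z ∈ OmegaLev lam₁ lam₂ β θ X) (i : Fin N₁) :
    z.2.1 i ≤ θ / lam₁ + Real.sqrt ((N₁ : ℝ) * (N₀ : ℝ) * θ / lam₂) * Xcol1 X := by
  obtain ⟨hΩ2, hO⟩ := hz
  have hθ0 : 0 < θ := lt_of_le_of_lt (by positivity) hθ
  have hV0 : ∀ i' n, 0 ≤ z.2.2.2 i' n := fun i' n => le_trans (le_max_right _ _) (hΩ2 i' n)
  have hF : 0 ≤ Fv X z := by unfold Fv; positivity
  have hP : 0 ≤ Pv β X z := by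
    unfold Pv
    apply mul_nonneg hbeta.le
    exact Finset.sum_nonneg fun n _ => Finset.sum_nonneg fun i' _ =>
      sub_nonneg.2 (hΩ2 i' n)
  have hR : Rv lam₁ lam₂ z ≤ θ := by
    have := hO; unfold Ov at this; linarith
  have hSV : 0 ≤ ∑ n, ∑ i', z.2.2.2 i' n :=
    Finset.sum_nonneg fun n _ => Finset.sum_nonneg fun i' _ => hV0 i' n
  have hSW : 0 ≤ ∑ i', ∑ j, (z.1 i' j) ^ 2 := by positivity
  set n : Fin N := ⟨0, hN⟩ with hn
  -- bound on v_{i,n}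
  have hvle : z.2.2.2 i n ≤ θ / lam₁ := by
    have h1 : z.2.2.2 i n ≤ ∑ n', ∑ i', z.2.2.2 i' n' := by
      calc z.2.2.2 i n ≤ ∑ i', z.2.2.2 i' n :=
            Finset.single_le_sum (fun i' _ => hV0 i' n) (Finset.mem_univ i)
        _ ≤ ∑ n', ∑ i', z.2.2.2 i' n' :=
            Finset.single_le_sum
              (fun n' _ => Finset.sum_nonneg fun i' _ => hV0 i' n') (Finset.mem_univ n)
    have h2 : lam₁ * z.2.2.2 i n ≤ θ := by
      unfold Rv at hR; nlinarith
    rw [le_div_iff₀ hlam₁]; linarith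
  -- bound on |W i j|
  have hWle : ∀ j, |z.1 i j| ≤ Real.sqrt (θ / lam₂) := by
    intro j
    have h1 : (z.1 i j) ^ 2 ≤ ∑ i', ∑ j', (z.1 i' j') ^ 2 := by
      calc (z.1 i j) ^ 2 ≤ ∑ j', (z.1 i j') ^ 2 :=
            Finset.single_le_sum (f := fun j' => (z.1 i j') ^ 2)
              (fun j' _ => sq_nonneg _) (Finset.mem_univ j)
        _ ≤ ∑ i', ∑ j', (z.1 i' j') ^ 2 :=
            Finset.single_le_sum (f := fun i' => ∑ j', (z.1 i' j') ^ 2)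
              (fun i' _ => Finset.sum_nonneg fun _ _ => sq_nonneg _) (Finset.mem_univ i)
    have h2 : (z.1 i j) ^ 2 ≤ θ / lam₂ := by
      rw [le_div_iff₀ hlam₂]; unfold Rv at hR; nlinarith
    calc |z.1 i j| = Real.sqrt ((z.1 i j) ^ 2) := (Real.sqrt_sq_eq_abs _).symm
      _ ≤ Real.sqrt (θ / lam₂) := Real.sqrt_le_sqrt h2
  have hb : z.2.1 i ≤ z.2.2.2 i n - ∑ j, z.1 i j * X j n := by
    have h := le_trans (le_max_left _ _) (hΩ2 i n)
    unfold preact at h; linarith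
  have hXn : ∑ j, |X j n| ≤ Xcol1 X := by
    unfold Xcol1
    exact le_ciSup (f := fun n' => ∑ j, |X j n'|)
      (Set.Finite.bddAbove (Set.finite_range _)) n
  have hX0 : 0 ≤ ∑ j, |X j n| := Finset.sum_nonneg fun _ _ => abs_nonneg _
  have hXc0 : 0 ≤ Xcol1 X := hX0.trans hXn
  have hsum : -(∑ j, z.1 i j * X j n) ≤ Real.sqrt (θ / lam₂) * ∑ j, |X j n| := by
    calc -(∑ j, z.1 i j * X j n) ≤ |∑ j, z.1 i j * X j n| := neg_le_abs _
      _ ≤ ∑ j, |z.1 i j * X j n| := Finset.abs_sum_le_sum_abs _ _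
      _ = ∑ j, |z.1 i j| * |X j n| := by simp [abs_mul]
      _ ≤ ∑ j, Real.sqrt (θ / lam₂) * |X j n| :=
          Finset.sum_le_sum fun j _ => mul_le_mul_of_nonneg_right (hWle j) (abs_nonneg _)
      _ = Real.sqrt (θ / lam₂) * ∑ j, |X j n| := by rw [Finset.mul_sum]
  have hsq : Real.sqrt (θ / lam₂) ≤ Real.sqrt ((N₁ : ℝ) * (N₀ : ℝ) * θ / lam₂) := by
    apply Real.sqrt_le_sqrt
    have ha : (1 : ℝ) ≤ (N₁ : ℝ) := by exact_mod_cast hN₁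
    have hb' : (1 : ℝ) ≤ (N₀ : ℝ) := by exact_mod_cast hN₀
    have h1 : (1 : ℝ) ≤ (N₁ : ℝ) * (N₀ : ℝ) := by nlinarith
    rw [div_le_div_iff₀ hlam₂ hlam₂]
    nlinarith [mul_nonneg (sub_nonneg.2 h1) (mul_pos hθ0 hlam₂).le]
  have hfin : Real.sqrt (θ / lam₂) * (∑ j, |X j n|)
      ≤ Real.sqrt ((N₁ : ℝ) * (N₀ : ℝ) * θ / lam₂) * Xcol1 X :=
    mul_le_mul hsq hXn hX0 (Real.sqrt_nonneg _)
  linarith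
end
end

section
/- For every point z = (W, b₁, b₂, V) in the level set Ω_θ and every index j ∈ {1,…,N₀}, the j-th entry of b₂ satisfies (b₂)_j ≤ θ√(N₁N₀θ)/(λ₁√λ₂) + √(Nθ) + ‖X‖₁. Consequently, combining with the bound (b₁)_j ≤ θ/λ₁ + √(N₁N₀θ/λ₂)‖X‖₁, every entry of (b₁)₊ and of (b₂)₊ is at most α. -/
open scoped BigOperators

noncomputable section

variable {N N₀ N₁ : ℕ}

theorem stmt2 (N N₀ N₁ : ℕ) (hN : 0 < N) (hN₀ : 0 < N₀) (hN₁ : 0 < N₁)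
    (lam₁ lam₂ β θ : ℝ) (hlam₁ : 0 < lam₁) (hlam₂ : 0 < lam₂) (hbeta : 0 < β)
    (X : Matrix (Fin N₀) (Fin N) ℝ)
    (hθ : (1 / (N : ℝ)) * ∑ j, ∑ n, (X j n) ^ 2 < θ)
    (z : Pt N N₀ N₁) (hz : z ∈ OmegaLev lam₁ lam₂ β θ X) :
    (∀ j : Fin N₀, z.2.2.1 j ≤
        θ * Real.sqrt ((N₁ : ℝ) * (N₀ : ℝ) * θ) / (lam₁ * Real.sqrt lam₂)
          + Real.sqrt ((N : ℝ) * θ) + Xcol1 X) ∧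
    (∀ i : Fin N₁, max (z.2.1 i) 0 ≤ alphaC N N₀ N₁ lam₁ lam₂ θ X) ∧
    (∀ j : Fin N₀, max (z.2.2.1 j) 0 ≤ alphaC N N₀ N₁ lam₁ lam₂ θ X) := by
  obtain ⟨hz2, hzO⟩ := hz
  have hθ0 : (0:ℝ) < θ := lt_of_le_of_lt (by positivity) hθ
  have hvnn : ∀ i n, 0 ≤ z.2.2.2 i n := fun i n => le_trans (le_max_right _ 0) (hz2 i n)
  have hcol : ∀ n, ∑ j, |X j n| ≤ Xcol1 X := by
    intro n
    have hbdd : BddAbove (Set.range fun n : Fin N => ∑ j, |X j n|) :=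
      Set.Finite.bddAbove (Set.finite_range _)
    exact le_ciSup hbdd n
  have n0 : Fin N := ⟨0, hN⟩
  have hXcol : 0 ≤ Xcol1 X := le_trans (by positivity) (hcol n0)
  have hXabs : ∀ j n, |X j n| ≤ Xcol1 X := by
    intro j n
    refine le_trans ?_ (hcol n)
    exact Finset.single_le_sum (fun j' _ => abs_nonneg (X j' n)) (Finset.mem_univ j)
  -- nonnegativity of the pieces
  have hF0 : 0 ≤ Fv X z := by
    unfold Fv; positivity
  have hP0 : 0 ≤ Pv β X z := by
    unfold Pv
    refine mul_nonneg hbeta.le (Finset.sum_nonneg fun n _ => Finset.sum_nonneg fun i _ => ?_)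
    exact sub_nonneg.2 (hz2 i n)
  have hSv0 : 0 ≤ ∑ n, ∑ i, z.2.2.2 i n :=
    Finset.sum_nonneg fun n _ => Finset.sum_nonneg fun i _ => hvnn i n
  have hSW0 : 0 ≤ ∑ i, ∑ j, (z.1 i j) ^ 2 := by positivity
  have hO : Fv X z + (lam₁ * ∑ n, ∑ i, z.2.2.2 i n + lam₂ * ∑ i, ∑ j, (z.1 i j) ^ 2)
      + Pv β X z ≤ θ := hzO
  have h1 : 0 ≤ lam₁ * ∑ n, ∑ i, z.2.2.2 i n := mul_nonneg hlam₁.le hSv0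
  have h2 : 0 ≤ lam₂ * ∑ i, ∑ j, (z.1 i j) ^ 2 := mul_nonneg hlam₂.le hSW0
  have hFθ : Fv X z ≤ θ := by linarith
  have hWθ : ∑ i, ∑ j, (z.1 i j) ^ 2 ≤ θ / lam₂ := by
    rw [le_div_iff₀ hlam₂]; linarith
  have hvθ : ∑ n, ∑ i, z.2.2.2 i n ≤ θ / lam₁ := by
    rw [le_div_iff₀ hlam₁]; linarith
  -- entrywise bound on W
  have hWabs : ∀ i j, |z.1 i j| ≤ Real.sqrt (θ / lam₂) := by
    intro i j
    rw [← Real.sqrt_sq_eq_abs]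
    refine Real.sqrt_le_sqrt (le_trans ?_ hWθ)
    refine le_trans (Finset.single_le_sum (f := fun j' => (z.1 i j') ^ 2)
      (fun j' _ => sq_nonneg _) (Finset.mem_univ j)) ?_
    exact Finset.single_le_sum (f := fun i' => ∑ j', (z.1 i' j') ^ 2)
      (fun i' _ => Finset.sum_nonneg fun j' _ => sq_nonneg _) (Finset.mem_univ i)
  -- column sums of V
  have hvsum : ∀ n, ∑ i, z.2.2.2 i n ≤ θ / lam₁ := by
    intro n
    exact le_trans (Finset.single_le_sum (f := fun n' => ∑ i, z.2.2.2 i n')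
      (fun n' _ => Finset.sum_nonneg fun i _ => hvnn i n') (Finset.mem_univ n)) hvθ
  have hventry : ∀ i n, z.2.2.2 i n ≤ θ / lam₁ := by
    intro i n
    exact le_trans (Finset.single_le_sum (f := fun i' => z.2.2.2 i' n)
      (fun i' _ => hvnn i' n) (Finset.mem_univ i)) (hvsum n)
  -- bound on relu(outPre)
  have hout : ∀ j n, relu (outPre z j n) ≤ |X j n| + Real.sqrt ((N:ℝ) * θ) := by
    intro j n
    have hS : ∑ n', ∑ j', (relu (outPre z j' n') - X j' n') ^ 2 ≤ (N:ℝ) * θ := by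
      have hN' : (0:ℝ) < (N:ℝ) := by exact_mod_cast hN
      have hF := hFθ
      unfold Fv at hF
      have h9 := mul_le_mul_of_nonneg_left hF hN'.le
      rw [← mul_assoc, mul_one_div, div_self (ne_of_gt hN'), one_mul] at h9
      exact h9
    have hterm : (relu (outPre z j n) - X j n) ^ 2 ≤ (N:ℝ) * θ := by
      refine le_trans ?_ hS
      refine le_trans (Finset.single_le_sum (f := fun j' => (relu (outPre z j' n) - X j' n) ^ 2)
        (fun j' _ => sq_nonneg _) (Finset.mem_univ j)) ?_
      exact Finset.single_le_sum (f := fun n' => ∑ j', (relu (outPre z j' n') - X j' n') ^ 2)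
        (fun n' _ => Finset.sum_nonneg fun j' _ => sq_nonneg _) (Finset.mem_univ n)
    have habs : |relu (outPre z j n) - X j n| ≤ Real.sqrt ((N:ℝ) * θ) := by
      rw [← Real.sqrt_sq_eq_abs]
      exact Real.sqrt_le_sqrt hterm
    have h3 := (abs_le.1 habs).2
    have hXle : X j n ≤ |X j n| := le_abs_self _
    linarith
  -- key product bound
  have hWV : ∀ j, |∑ i, z.1 i j * z.2.2.2 i n0| ≤ Real.sqrt (θ / lam₂) * (θ / lam₁) := by
    intro j
    calc |∑ i, z.1 i j * z.2.2.2 i n0| ≤ ∑ i, |z.1 i j * z.2.2.2 i n0| :=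
          Finset.abs_sum_le_sum_abs _ _
      _ = ∑ i, |z.1 i j| * z.2.2.2 i n0 := by
          refine Finset.sum_congr rfl fun i _ => ?_
          rw [abs_mul, abs_of_nonneg (hvnn i n0)]
      _ ≤ ∑ i, Real.sqrt (θ / lam₂) * z.2.2.2 i n0 :=
          Finset.sum_le_sum fun i _ => mul_le_mul_of_nonneg_right (hWabs i j) (hvnn i n0)
      _ = Real.sqrt (θ / lam₂) * ∑ i, z.2.2.2 i n0 := by rw [Finset.mul_sum]
      _ ≤ Real.sqrt (θ / lam₂) * (θ / lam₁) :=
          mul_le_mul_of_nonneg_left (hvsum n0) (Real.sqrt_nonneg _)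
  have h11 : (1:ℝ) ≤ (N₁:ℝ) := by exact_mod_cast hN₁
  have h10 : (1:ℝ) ≤ (N₀:ℝ) := by exact_mod_cast hN₀
  have h110 : (1:ℝ) ≤ (N₁:ℝ) * (N₀:ℝ) := by nlinarith
  have hθle : θ ≤ (N₁:ℝ) * (N₀:ℝ) * θ := by nlinarith [mul_le_mul_of_nonneg_right h110 hθ0.le]
  have hs2 : (0:ℝ) < Real.sqrt lam₂ := Real.sqrt_pos.2 hlam₂
  have hkey : Real.sqrt (θ / lam₂) * (θ / lam₁)
      ≤ θ * Real.sqrt ((N₁:ℝ) * (N₀:ℝ) * θ) / (lam₁ * Real.sqrt lam₂) := by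
    rw [Real.sqrt_div hθ0.le]
    have hsq : Real.sqrt θ ≤ Real.sqrt ((N₁:ℝ) * (N₀:ℝ) * θ) := Real.sqrt_le_sqrt hθle
    have heq : Real.sqrt θ / Real.sqrt lam₂ * (θ / lam₁)
        = Real.sqrt θ * θ / (lam₁ * Real.sqrt lam₂) := by ring
    rw [heq]
    have hden : (0:ℝ) < lam₁ * Real.sqrt lam₂ := by positivity
    apply div_le_div_of_nonneg_right ?_ hden.le
    nlinarith [hθ0.le, Real.sqrt_nonneg θ]
  -- b₂ bound
  have hb2 : ∀ j : Fin N₀, z.2.2.1 j ≤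
      θ * Real.sqrt ((N₁:ℝ) * (N₀:ℝ) * θ) / (lam₁ * Real.sqrt lam₂)
        + Real.sqrt ((N:ℝ) * θ) + Xcol1 X := by
    intro j
    have hdecomp : z.2.2.1 j = outPre z j n0 - ∑ i, z.1 i j * z.2.2.2 i n0 := by
      unfold outPre; ring
    have h3 : outPre z j n0 ≤ relu (outPre z j n0) := le_max_left _ 0
    have h4 := hout j n0
    have h5 := hXabs j n0
    have h6 := (abs_le.1 (hWV j)).1
    rw [hdecomp]
    linarith
  -- b₁ bound
  have hb1 : ∀ i : Fin N₁, z.2.1 i ≤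
      θ / lam₁ + Real.sqrt ((N₁:ℝ) * (N₀:ℝ) * θ / lam₂) * Xcol1 X := by
    intro i
    have hdecomp : z.2.1 i = preact X z i n0 - ∑ j, z.1 i j * X j n0 := by
      unfold preact; ring
    have h3 : preact X z i n0 ≤ relu (preact X z i n0) := le_max_left _ 0
    have h4 := le_trans (hz2 i n0) (hventry i n0)
    have hWX : |∑ j, z.1 i j * X j n0| ≤ Real.sqrt (θ / lam₂) * Xcol1 X := by
      calc |∑ j, z.1 i j * X j n0| ≤ ∑ j, |z.1 i j * X j n0| := Finset.abs_sum_le_sum_abs _ _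
        _ = ∑ j, |z.1 i j| * |X j n0| := Finset.sum_congr rfl fun j _ => abs_mul _ _
        _ ≤ ∑ j, Real.sqrt (θ / lam₂) * |X j n0| :=
            Finset.sum_le_sum fun j _ =>
              mul_le_mul_of_nonneg_right (hWabs i j) (abs_nonneg _)
        _ = Real.sqrt (θ / lam₂) * ∑ j, |X j n0| := by rw [Finset.mul_sum]
        _ ≤ Real.sqrt (θ / lam₂) * Xcol1 X :=
            mul_le_mul_of_nonneg_left (hcol n0) (Real.sqrt_nonneg _)
    have hsmono : Real.sqrt (θ / lam₂) ≤ Real.sqrt ((N₁:ℝ) * (N₀:ℝ) * θ / lam₂) := by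
      apply Real.sqrt_le_sqrt
      exact div_le_div_of_nonneg_right hθle hlam₂.le
    have h6 := (abs_le.1 hWX).1
    have h7 : Real.sqrt (θ / lam₂) * Xcol1 X ≤ Real.sqrt ((N₁:ℝ) * (N₀:ℝ) * θ / lam₂) * Xcol1 X :=
      mul_le_mul_of_nonneg_right hsmono hXcol
    rw [hdecomp]
    linarith
  refine ⟨hb2, fun i => ?_, fun j => ?_⟩
  · refine max_le (le_trans (hb1 i) (le_max_left _ _)) ?_
    refine le_trans ?_ (le_max_left _ _ : _ ≤ alphaC N N₀ N₁ lam₁ lam₂ θ X)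
    exact add_nonneg (by positivity) (mul_nonneg (Real.sqrt_nonneg _) hXcol)
  · refine max_le (le_trans (hb2 j) (le_max_right _ _)) ?_
    refine le_trans ?_ (le_max_right _ _ : _ ≤ alphaC N N₀ N₁ lam₁ lam₂ θ X)
    exact add_nonneg (add_nonneg (by positivity) (Real.sqrt_nonneg _)) hXcol
end
end

section
/- Let z = (W, b₁, b₂, V) ∈ Ω_θ and define z̄ = (W, b̄₁, b̄₂, V) by (b̄₁)_j = max{(b₁)_j, −α} for all j and (b̄₂)_j = max{(b₂)_j, −α} for all j. Then z̄ is the Euclidean projection of z onto Ω₃, z̄ ∈ Z = Ω₂ ∩ Ω₃, and O(z̄) = O(z). -/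
open scoped BigOperators

noncomputable section

variable {N N₀ N₁ : ℕ}

private lemma relu_add_max (c b A : ℝ) (hc : c ≤ A) :
    relu (c + max b (-A)) = relu (c + b) := by
  rcases le_or_gt (-A) b with h | h
  · rw [max_eq_left h]
  · rw [max_eq_right h.le]
    unfold relu
    rw [max_eq_right (by linarith), max_eq_right (by linarith)]

private lemma sq_proj_le (b w A : ℝ) (hw : |w| ≤ A) : (b - max b (-A)) ^ 2 ≤ (b - w) ^ 2 := by
  rcases le_or_gt (-A) b with h | h
  · rw [max_eq_left h, sub_self]
    simpa using sq_nonneg (b - w)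
  · rw [max_eq_right h.le]
    have := abs_le.mp hw
    nlinarith [this.1, this.2]

theorem stmt3 (N N₀ N₁ : ℕ) (hN : 0 < N) (hN₀ : 0 < N₀) (hN₁ : 0 < N₁)
    (lam₁ lam₂ β θ : ℝ) (hlam₁ : 0 < lam₁) (hlam₂ : 0 < lam₂) (hbeta : 0 < β)
    (X : Matrix (Fin N₀) (Fin N) ℝ)
    (hθ : (1 / (N : ℝ)) * ∑ j, ∑ n, (X j n) ^ 2 < θ)
    (z : Pt N N₀ N₁) (hz : z ∈ OmegaLev lam₁ lam₂ β θ X)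
    (zb : Pt N N₀ N₁)
    (hzb : zb = (z.1, fun i => max (z.2.1 i) (-(alphaC N N₀ N₁ lam₁ lam₂ θ X)),
                 fun j => max (z.2.2.1 j) (-(alphaC N N₀ N₁ lam₁ lam₂ θ X)), z.2.2.2)) :
    zb ∈ Omega3 lam₁ lam₂ θ X ∧
    (∀ w : Pt N N₀ N₁, w ∈ Omega3 lam₁ lam₂ θ X → distPt z zb ≤ distPt z w) ∧
    zb ∈ Zset lam₁ lam₂ θ X ∧
    Ov lam₁ lam₂ β X zb = Ov lam₁ lam₂ β X z := by
  subst hzb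
  obtain ⟨W, b1, b2, V⟩ := z
  set A := alphaC N N₀ N₁ lam₁ lam₂ θ X with hAdef
  obtain ⟨hz2, hO⟩ := hz
  simp only [Omega2, Set.mem_setOf_eq] at hz2
  have hθ0 : 0 < θ := lt_of_le_of_lt (by positivity) hθ
  have n₀ : Fin N := ⟨0, hN⟩
  -- nonnegativity of v
  have hvnn : ∀ i n, 0 ≤ V i n := fun i n => le_trans (le_max_right _ 0) (hz2 i n)
  -- nonnegativity of the pieces
  have hF0 : 0 ≤ Fv X (W, b1, b2, V) := by
    unfold Fv; positivity
  have hP0 : 0 ≤ Pv β X (W, b1, b2, V) := by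
    refine mul_nonneg hbeta.le (Finset.sum_nonneg fun n _ => Finset.sum_nonneg fun i _ => ?_)
    exact sub_nonneg.mpr (hz2 i n)
  have hSv0 : 0 ≤ ∑ n, ∑ i, V i n :=
    Finset.sum_nonneg fun n _ => Finset.sum_nonneg fun i _ => hvnn i n
  have hSW0 : 0 ≤ ∑ i, ∑ j, W i j ^ 2 := by positivity
  unfold Ov Rv at hO
  simp only at hO
  have hSv : ∑ n, ∑ i, V i n ≤ θ / lam₁ := by
    rw [le_div_iff₀ hlam₁]; nlinarith
  have hSW : ∑ i, ∑ j, W i j ^ 2 ≤ θ / lam₂ := by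
    rw [le_div_iff₀ hlam₂]; nlinarith
  have hFθ : Fv X (W, b1, b2, V) ≤ θ := by nlinarith
  -- elementwise bounds
  have hW : ∀ i j, |W i j| ≤ Real.sqrt (θ / lam₂) := by
    intro i j
    rw [← Real.sqrt_sq_eq_abs]
    refine Real.sqrt_le_sqrt ?_
    calc W i j ^ 2 ≤ ∑ j', W i j' ^ 2 :=
          Finset.single_le_sum (f := fun j' => W i j' ^ 2) (fun _ _ => sq_nonneg _)
            (Finset.mem_univ j)
      _ ≤ ∑ i', ∑ j', W i' j' ^ 2 :=
          Finset.single_le_sum (f := fun i' => ∑ j', W i' j' ^ 2)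
            (fun _ _ => Finset.sum_nonneg fun _ _ => sq_nonneg _) (Finset.mem_univ i)
      _ ≤ θ / lam₂ := hSW
  have hVcol : ∀ n, ∑ i, V i n ≤ θ / lam₁ := by
    intro n
    calc ∑ i, V i n ≤ ∑ n', ∑ i, V i n' :=
          Finset.single_le_sum (f := fun n' => ∑ i, V i n')
            (fun _ _ => Finset.sum_nonneg fun _ _ => hvnn _ _) (Finset.mem_univ n)
      _ ≤ θ / lam₁ := hSv
  -- column norm bounds of X
  have hXc : ∀ n : Fin N, ∑ j, |X j n| ≤ Xcol1 X := by
    intro n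
    unfold Xcol1
    exact le_ciSup (f := fun n => ∑ j, |X j n|)
      (Set.Finite.bddAbove (Set.finite_range _)) n
  have hXc0 : 0 ≤ Xcol1 X :=
    le_trans (Finset.sum_nonneg fun _ _ => abs_nonneg _) (hXc n₀)
  have hXent : ∀ j n, |X j n| ≤ Xcol1 X := fun j n =>
    le_trans (Finset.single_le_sum (f := fun j' => |X j' n|) (fun _ _ => abs_nonneg _)
      (Finset.mem_univ j)) (hXc n)
  -- bound on W x
  have hWx : ∀ i n, |∑ j, W i j * X j n| ≤ Real.sqrt (θ / lam₂) * Xcol1 X := by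
    intro i n
    calc |∑ j, W i j * X j n| ≤ ∑ j, |W i j * X j n| := Finset.abs_sum_le_sum_abs _ _
      _ ≤ ∑ j, Real.sqrt (θ / lam₂) * |X j n| := by
          refine Finset.sum_le_sum fun j _ => ?_
          rw [abs_mul]
          exact mul_le_mul_of_nonneg_right (hW i j) (abs_nonneg _)
      _ = Real.sqrt (θ / lam₂) * ∑ j, |X j n| := by rw [Finset.mul_sum]
      _ ≤ Real.sqrt (θ / lam₂) * Xcol1 X :=
          mul_le_mul_of_nonneg_left (hXc n) (Real.sqrt_nonneg _)
  -- bound on Wᵀ v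
  have hWv : ∀ j n, |∑ i, W i j * V i n| ≤ Real.sqrt (θ / lam₂) * (θ / lam₁) := by
    intro j n
    calc |∑ i, W i j * V i n| ≤ ∑ i, |W i j * V i n| := Finset.abs_sum_le_sum_abs _ _
      _ ≤ ∑ i, Real.sqrt (θ / lam₂) * V i n := by
          refine Finset.sum_le_sum fun i _ => ?_
          rw [abs_mul, abs_of_nonneg (hvnn i n)]
          exact mul_le_mul_of_nonneg_right (hW i j) (hvnn i n)
      _ = Real.sqrt (θ / lam₂) * ∑ i, V i n := by rw [Finset.mul_sum]
      _ ≤ Real.sqrt (θ / lam₂) * (θ / lam₁) :=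
          mul_le_mul_of_nonneg_left (hVcol n) (Real.sqrt_nonneg _)
  -- comparisons of square roots
  have h11 : (1 : ℝ) ≤ (N₁ : ℝ) := by exact_mod_cast hN₁
  have h10 : (1 : ℝ) ≤ (N₀ : ℝ) := by exact_mod_cast hN₀
  have hsq1 : Real.sqrt (θ / lam₂) ≤ Real.sqrt ((N₁ : ℝ) * (N₀ : ℝ) * θ / lam₂) := by
    refine Real.sqrt_le_sqrt ((div_le_div_iff_of_pos_right hlam₂).mpr ?_)
    have h1 : (1:ℝ) ≤ (N₁:ℝ) * (N₀:ℝ) := by nlinarith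
    nlinarith
  have hA1le : θ / lam₁ + Real.sqrt ((N₁ : ℝ) * (N₀ : ℝ) * θ / lam₂) * Xcol1 X ≤ A :=
    le_max_left _ _
  have hA2le : θ * Real.sqrt ((N₁ : ℝ) * (N₀ : ℝ) * θ) / (lam₁ * Real.sqrt lam₂)
      + Real.sqrt ((N : ℝ) * θ) + Xcol1 X ≤ A := le_max_right _ _
  have hθl1 : 0 < θ / lam₁ := div_pos hθ0 hlam₁
  -- first key bound : |W x| ≤ A  (with room θ/λ₁)
  have hWxA : ∀ i n, |∑ j, W i j * X j n| + θ / lam₁ ≤ A := by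
    intro i n
    refine le_trans ?_ hA1le
    have := hWx i n
    have := mul_le_mul_of_nonneg_right hsq1 hXc0
    linarith
  have hc1 : ∀ i n, (∑ j, W i j * X j n) ≤ A := fun i n =>
    le_trans (le_trans (le_abs_self _) (by linarith [hWxA i n])) le_rfl
  -- second key bound : √(θ/λ₂)·(θ/λ₁) ≤ θ√(N₁N₀θ)/(λ₁√λ₂)
  have hsq2 : Real.sqrt (θ / lam₂) * (θ / lam₁)
      ≤ θ * Real.sqrt ((N₁ : ℝ) * (N₀ : ℝ) * θ) / (lam₁ * Real.sqrt lam₂) := by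
    have hrw : Real.sqrt ((N₁ : ℝ) * (N₀ : ℝ) * θ / lam₂)
        = Real.sqrt ((N₁ : ℝ) * (N₀ : ℝ) * θ) / Real.sqrt lam₂ :=
      Real.sqrt_div (by positivity) _
    have : Real.sqrt (θ / lam₂) * (θ / lam₁)
        ≤ Real.sqrt ((N₁ : ℝ) * (N₀ : ℝ) * θ) / Real.sqrt lam₂ * (θ / lam₁) := by
      rw [← hrw]
      exact mul_le_mul_of_nonneg_right hsq1 hθl1.le
    refine this.trans_eq ?_
    field_simp
  have hWvA : ∀ j n, |∑ i, W i j * V i n| + Real.sqrt ((N : ℝ) * θ) + Xcol1 X ≤ A := by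
    intro j n
    refine le_trans ?_ hA2le
    have := (hWv j n).trans hsq2
    linarith
  have hc2 : ∀ j n, (∑ i, W i j * V i n) ≤ A := by
    intro j n
    have h1 := hWvA j n
    have h2 := le_abs_self (∑ i, W i j * V i n)
    have h3 := Real.sqrt_nonneg ((N : ℝ) * θ)
    linarith
  -- positivity of A
  have hA0 : 0 ≤ A := by
    refine le_trans ?_ hA1le
    have := mul_nonneg (Real.sqrt_nonneg ((N₁ : ℝ) * (N₀ : ℝ) * θ / lam₂)) hXc0
    linarith
  -- relu-invariance under truncation
  have hpre : ∀ i n, relu (preact X (W, (fun i => max (b1 i) (-A)),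
      (fun j => max (b2 j) (-A)), V) i n) = relu (preact X (W, b1, b2, V) i n) := by
    intro i n
    simp only [preact]
    exact relu_add_max _ _ _ (hc1 i n)
  have hout : ∀ j n, relu (outPre (W, (fun i => max (b1 i) (-A)),
      (fun j => max (b2 j) (-A)), V) j n) = relu (outPre (W, b1, b2, V) j n) := by
    intro j n
    simp only [outPre]
    exact relu_add_max _ _ _ (hc2 j n)
  -- bound b1 i ≤ A
  have hb1 : ∀ i, b1 i ≤ A := by
    intro i
    have h1 : preact X (W, b1, b2, V) i n₀ ≤ V i n₀ := (le_max_left _ 0).trans (hz2 i n₀)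
    simp only [preact] at h1
    have h2 : V i n₀ ≤ θ / lam₁ := le_trans
      (Finset.single_le_sum (fun i' _ => hvnn i' n₀) (Finset.mem_univ i)) (hVcol n₀)
    have h3 := hWxA i n₀
    have h4 := neg_abs_le (∑ j, W i j * X j n₀)
    linarith
  -- bound b2 j ≤ A
  have hb2 : ∀ j, b2 j ≤ A := by
    intro j
    have hterm : (relu (outPre (W, b1, b2, V) j n₀) - X j n₀) ^ 2 ≤ (N : ℝ) * θ := by
      have hN0 : (0 : ℝ) < (N : ℝ) := by exact_mod_cast hN
      have hsum : (1 / (N : ℝ)) * ∑ n, ∑ j', (relu (outPre (W, b1, b2, V) j' n) - X j' n) ^ 2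
          ≤ θ := hFθ
      have h1 : ∑ n, ∑ j', (relu (outPre (W, b1, b2, V) j' n) - X j' n) ^ 2 ≤ (N : ℝ) * θ := by
        rw [div_mul_eq_mul_div, one_mul, div_le_iff₀ hN0] at hsum
        linarith [hsum]
      calc (relu (outPre (W, b1, b2, V) j n₀) - X j n₀) ^ 2
          ≤ ∑ j', (relu (outPre (W, b1, b2, V) j' n₀) - X j' n₀) ^ 2 :=
            Finset.single_le_sum (f := fun j' => (relu (outPre (W, b1, b2, V) j' n₀) - X j' n₀) ^ 2)
              (fun _ _ => sq_nonneg _) (Finset.mem_univ j)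
        _ ≤ ∑ n, ∑ j', (relu (outPre (W, b1, b2, V) j' n) - X j' n) ^ 2 :=
            Finset.single_le_sum (f := fun n => ∑ j', (relu (outPre (W, b1, b2, V) j' n) - X j' n) ^ 2)
              (fun _ _ => Finset.sum_nonneg fun _ _ => sq_nonneg _) (Finset.mem_univ n₀)
        _ ≤ (N : ℝ) * θ := h1
    have habs : |relu (outPre (W, b1, b2, V) j n₀) - X j n₀| ≤ Real.sqrt ((N : ℝ) * θ) := by
      rw [← Real.sqrt_sq_eq_abs]
      exact Real.sqrt_le_sqrt hterm
    have h5 : relu (outPre (W, b1, b2, V) j n₀) ≤ Real.sqrt ((N : ℝ) * θ) + Xcol1 X := by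
      have := abs_le.mp habs
      have := hXent j n₀
      have := abs_le.mp (hXent j n₀)
      linarith
    have h6 : outPre (W, b1, b2, V) j n₀ ≤ relu (outPre (W, b1, b2, V) j n₀) := le_max_left _ 0
    simp only [outPre] at h5 h6
    have h7 := hWvA j n₀
    have h8 := neg_abs_le (∑ i, W i j * V i n₀)
    linarith
  -- membership in Ω₃
  have hmem3 : ((W, (fun i => max (b1 i) (-A)), (fun j => max (b2 j) (-A)), V) : Pt N N₀ N₁)
      ∈ Omega3 lam₁ lam₂ θ X := by
    constructor
    · intro i
      simp only
      rw [abs_le]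
      exact ⟨le_max_right _ _, max_le (hb1 i) (by linarith)⟩
    · intro j
      simp only
      rw [abs_le]
      exact ⟨le_max_right _ _, max_le (hb2 j) (by linarith)⟩
  refine ⟨hmem3, ?_, ⟨?_, hmem3⟩, ?_⟩
  · -- projection property
    intro w hw
    obtain ⟨hw1, hw2⟩ := hw
    unfold distPt normPt
    refine Real.sqrt_le_sqrt ?_
    simp only [sqnormPt, Prod.fst_sub, Prod.snd_sub, Matrix.sub_apply, Pi.sub_apply, sub_self,
      ne_eq, OfNat.ofNat_ne_zero, not_false_eq_true, zero_pow, Finset.sum_const_zero,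
      zero_add, add_zero]
    have h1 : ∑ i, (b1 i - max (b1 i) (-A)) ^ 2 ≤ ∑ i, (b1 i - w.2.1 i) ^ 2 :=
      Finset.sum_le_sum fun i _ => sq_proj_le _ _ _ (hw1 i)
    have h2 : ∑ j, (b2 j - max (b2 j) (-A)) ^ 2 ≤ ∑ j, (b2 j - w.2.2.1 j) ^ 2 :=
      Finset.sum_le_sum fun j _ => sq_proj_le _ _ _ (hw2 j)
    have h3 : (0:ℝ) ≤ ∑ i, ∑ j, (W i j - w.1 i j) ^ 2 := by positivity
    have h4 : (0:ℝ) ≤ ∑ i, ∑ n, (V i n - w.2.2.2 i n) ^ 2 := by positivity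
    linarith
  · -- membership in Ω₂
    simp only [Omega2, Set.mem_setOf_eq]
    intro i n
    rw [hpre i n]
    exact hz2 i n
  · -- objective unchanged
    have hFeq : Fv X ((W, (fun i => max (b1 i) (-A)), (fun j => max (b2 j) (-A)), V) : Pt N N₀ N₁)
        = Fv X (W, b1, b2, V) := by
      unfold Fv
      exact congrArg _ (Finset.sum_congr rfl fun n _ => Finset.sum_congr rfl fun j _ => by
        rw [hout j n])
    have hPeq : Pv β X ((W, (fun i => max (b1 i) (-A)), (fun j => max (b2 j) (-A)), V) : Pt N N₀ N₁)
        = Pv β X (W, b1, b2, V) := by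
      unfold Pv
      exact congrArg _ (Finset.sum_congr rfl fun n _ => Finset.sum_congr rfl fun i _ => by
        rw [hpre i n])
    unfold Ov
    rw [hFeq, hPeq]
    rfl
end
end

section
/- The set of global minimizers of O over Z = Ω₂ ∩ Ω₃ is nonempty and bounded, and every global minimizer of O over Z is also a global minimizer of O over Ω₂. -/
open scoped BigOperators

noncomputable section

variable {N N₀ N₁ : ℕ}

variable {N N₀ N₁ : ℕ} {lam₁ lam₂ β θ : ℝ} {X : Matrix (Fin N₀) (Fin N) ℝ}

lemma relu_nonneg (y : ℝ) : 0 ≤ relu y := le_max_right _ _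
lemma le_relu (y : ℝ) : y ≤ relu y := le_max_left _ _
lemma relu_of_nonpos {y : ℝ} (h : y ≤ 0) : relu y = 0 := max_eq_right h

lemma v_nonneg {z : Pt N N₀ N₁} (hz : z ∈ Omega2 X) (i : Fin N₁) (n : Fin N) :
    0 ≤ z.2.2.2 i n := (relu_nonneg _).trans (hz i n)

lemma Fv_nonneg (z : Pt N N₀ N₁) : 0 ≤ Fv X z := by
  unfold Fv; positivity

lemma Pv_nonneg (hβ : 0 < β) {z : Pt N N₀ N₁} (hz : z ∈ Omega2 X) : 0 ≤ Pv β X z := by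
  unfold Pv
  refine mul_nonneg hβ.le (Finset.sum_nonneg fun n _ => Finset.sum_nonneg fun i _ => ?_)
  have := hz i n; linarith

lemma Rv_split (hl₁ : 0 < lam₁) (hl₂ : 0 < lam₂) {z : Pt N N₀ N₁} (hz : z ∈ Omega2 X) :
    lam₁ * (∑ n, ∑ i, z.2.2.2 i n) ≤ Rv lam₁ lam₂ z ∧
    lam₂ * (∑ i, ∑ j, (z.1 i j) ^ 2) ≤ Rv lam₁ lam₂ z ∧ 0 ≤ Rv lam₁ lam₂ z := by
  have h1 : 0 ≤ lam₁ * (∑ n, ∑ i, z.2.2.2 i n) :=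
    mul_nonneg hl₁.le (Finset.sum_nonneg fun n _ => Finset.sum_nonneg fun i _ => v_nonneg hz i n)
  have h2 : 0 ≤ lam₂ * (∑ i, ∑ j, (z.1 i j) ^ 2) := by positivity
  unfold Rv; refine ⟨by linarith, by linarith, by linarith⟩

/-- bounds from `z ∈ Ω₂`, `O(z) ≤ θ`. -/
lemma level_bounds (hβ : 0 < β) (hl₁ : 0 < lam₁) (hl₂ : 0 < lam₂)
    {z : Pt N N₀ N₁} (hz : z ∈ Omega2 X) (hO : Ov lam₁ lam₂ β X z ≤ θ) :
    Fv X z ≤ θ ∧ lam₁ * (∑ n, ∑ i, z.2.2.2 i n) ≤ θ ∧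
    lam₂ * (∑ i, ∑ j, (z.1 i j) ^ 2) ≤ θ := by
  obtain ⟨h1, h2, h3⟩ := Rv_split hl₁ hl₂ hz (X := X)
  have hF := Fv_nonneg (X := X) z
  have hP := Pv_nonneg hβ hz
  unfold Ov at hO
  exact ⟨by linarith, by linarith, by linarith⟩

lemma v_le (hl₁ : 0 < lam₁) {z : Pt N N₀ N₁} (hz : z ∈ Omega2 X)
    (h : lam₁ * (∑ n, ∑ i, z.2.2.2 i n) ≤ θ) (i : Fin N₁) (n : Fin N) :
    z.2.2.2 i n ≤ θ / lam₁ := by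
  have hsum : z.2.2.2 i n ≤ ∑ n, ∑ i, z.2.2.2 i n := by
    calc z.2.2.2 i n ≤ ∑ i, z.2.2.2 i n :=
          Finset.single_le_sum (fun i _ => v_nonneg hz i n) (Finset.mem_univ i)
      _ ≤ ∑ n, ∑ i, z.2.2.2 i n :=
          Finset.single_le_sum (f := fun n => ∑ i, z.2.2.2 i n)
            (fun n _ => Finset.sum_nonneg fun i _ => v_nonneg hz i n) (Finset.mem_univ n)
  rw [le_div_iff₀ hl₁]
  nlinarith

lemma vcol_le (hl₁ : 0 < lam₁) {z : Pt N N₀ N₁} (hz : z ∈ Omega2 X)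
    (h : lam₁ * (∑ n, ∑ i, z.2.2.2 i n) ≤ θ) (n : Fin N) :
    ∑ i, z.2.2.2 i n ≤ θ / lam₁ := by
  have hsum : ∑ i, z.2.2.2 i n ≤ ∑ n, ∑ i, z.2.2.2 i n :=
    Finset.single_le_sum (f := fun n => ∑ i, z.2.2.2 i n)
      (fun n _ => Finset.sum_nonneg fun i _ => v_nonneg hz i n) (Finset.mem_univ n)
  rw [le_div_iff₀ hl₁]; nlinarith

lemma W_le (hl₂ : 0 < lam₂) {z : Pt N N₀ N₁}
    (h : lam₂ * (∑ i, ∑ j, (z.1 i j) ^ 2) ≤ θ) (i : Fin N₁) (j : Fin N₀) :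
    |z.1 i j| ≤ Real.sqrt (θ / lam₂) := by
  have hsq : (z.1 i j) ^ 2 ≤ θ / lam₂ := by
    rw [le_div_iff₀ hl₂]
    have : (z.1 i j) ^ 2 ≤ ∑ i, ∑ j, (z.1 i j) ^ 2 := by
      calc (z.1 i j) ^ 2 ≤ ∑ j, (z.1 i j) ^ 2 :=
            Finset.single_le_sum (f := fun j => (z.1 i j) ^ 2) (fun j _ => sq_nonneg _) (Finset.mem_univ j)
        _ ≤ ∑ i, ∑ j, (z.1 i j) ^ 2 :=
            Finset.single_le_sum (f := fun i => ∑ j, (z.1 i j) ^ 2)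
              (fun i _ => Finset.sum_nonneg fun j _ => sq_nonneg _) (Finset.mem_univ i)
    nlinarith
  calc |z.1 i j| = Real.sqrt ((z.1 i j) ^ 2) := (Real.sqrt_sq_eq_abs _).symm
    _ ≤ Real.sqrt (θ / lam₂) := Real.sqrt_le_sqrt hsq

lemma Xcol1_bound (hN : 0 < N) (n : Fin N) : ∑ j, |X j n| ≤ Xcol1 X := by
  unfold Xcol1
  exact le_ciSup (f := fun n : Fin N => ∑ j, |X j n|) (Set.Finite.bddAbove (Set.finite_range _)) n

lemma Xabs_le (hN : 0 < N) (j : Fin N₀) (n : Fin N) : |X j n| ≤ Xcol1 X := by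
  refine le_trans ?_ (Xcol1_bound hN n)
  exact Finset.single_le_sum (f := fun j => |X j n|) (fun _ _ => abs_nonneg _) (Finset.mem_univ j)

lemma Xcol1_nonneg (hN : 0 < N) : 0 ≤ (Xcol1 X : ℝ) := by
  have n : Fin N := ⟨0, hN⟩
  exact le_trans (Finset.sum_nonneg fun j _ => abs_nonneg (X j n)) (Xcol1_bound hN n)

lemma SWx_le (hN : 0 < N) (hl₂ : 0 < lam₂) {z : Pt N N₀ N₁}
    (h : lam₂ * (∑ i, ∑ j, (z.1 i j) ^ 2) ≤ θ) (i : Fin N₁) (n : Fin N) :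
    |∑ j, z.1 i j * X j n| ≤ Real.sqrt (θ / lam₂) * Xcol1 X := by
  calc |∑ j, z.1 i j * X j n| ≤ ∑ j, |z.1 i j * X j n| := Finset.abs_sum_le_sum_abs _ _
    _ ≤ ∑ j, Real.sqrt (θ / lam₂) * |X j n| := by
        refine Finset.sum_le_sum fun j _ => ?_
        rw [abs_mul]
        exact mul_le_mul_of_nonneg_right (W_le hl₂ h i j) (abs_nonneg _)
    _ = Real.sqrt (θ / lam₂) * ∑ j, |X j n| := by rw [Finset.mul_sum]
    _ ≤ Real.sqrt (θ / lam₂) * Xcol1 X :=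
        mul_le_mul_of_nonneg_left (Xcol1_bound hN n) (Real.sqrt_nonneg _)

lemma SWv_le (hl₁ : 0 < lam₁) (hl₂ : 0 < lam₂) {z : Pt N N₀ N₁} (hz : z ∈ Omega2 X)
    (hv : lam₁ * (∑ n, ∑ i, z.2.2.2 i n) ≤ θ)
    (hW : lam₂ * (∑ i, ∑ j, (z.1 i j) ^ 2) ≤ θ) (j : Fin N₀) (n : Fin N) :
    |∑ i, z.1 i j * z.2.2.2 i n| ≤ Real.sqrt (θ / lam₂) * (θ / lam₁) := by
  calc |∑ i, z.1 i j * z.2.2.2 i n| ≤ ∑ i, |z.1 i j * z.2.2.2 i n| := Finset.abs_sum_le_sum_abs _ _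
    _ ≤ ∑ i, Real.sqrt (θ / lam₂) * z.2.2.2 i n := by
        refine Finset.sum_le_sum fun i _ => ?_
        rw [abs_mul, abs_of_nonneg (v_nonneg hz i n)]
        exact mul_le_mul_of_nonneg_right (W_le hl₂ hW i j) (v_nonneg hz i n)
    _ = Real.sqrt (θ / lam₂) * ∑ i, z.2.2.2 i n := by rw [Finset.mul_sum]
    _ ≤ Real.sqrt (θ / lam₂) * (θ / lam₁) :=
        mul_le_mul_of_nonneg_left (vcol_le hl₁ hz hv n) (Real.sqrt_nonneg _)

lemma reluOut_le (hN : 0 < N) (hθ0 : 0 ≤ θ) {z : Pt N N₀ N₁}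
    (hF : Fv X z ≤ θ) (j : Fin N₀) (n : Fin N) :
    relu (outPre z j n) ≤ Real.sqrt ((N : ℝ) * θ) + Xcol1 X := by
  have hNpos : (0:ℝ) < N := by exact_mod_cast hN
  have hsq : (relu (outPre z j n) - X j n) ^ 2 ≤ (N : ℝ) * θ := by
    unfold Fv at hF
    have hmem : (relu (outPre z j n) - X j n) ^ 2 ≤ ∑ n, ∑ j, (relu (outPre z j n) - X j n) ^ 2 := by
      calc (relu (outPre z j n) - X j n) ^ 2 ≤ ∑ j, (relu (outPre z j n) - X j n) ^ 2 :=
            Finset.single_le_sum (f := fun j => (relu (outPre z j n) - X j n) ^ 2)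
              (fun _ _ => sq_nonneg _) (Finset.mem_univ j)
        _ ≤ _ := Finset.single_le_sum (f := fun n => ∑ j, (relu (outPre z j n) - X j n) ^ 2)
              (fun _ _ => Finset.sum_nonneg fun _ _ => sq_nonneg _) (Finset.mem_univ n)
    rw [one_div, inv_mul_eq_div] at hF
    have hS := (div_le_iff₀ hNpos).mp hF
    nlinarith
  have habs : |relu (outPre z j n) - X j n| ≤ Real.sqrt ((N : ℝ) * θ) := by
    calc |relu (outPre z j n) - X j n| = Real.sqrt ((relu (outPre z j n) - X j n) ^ 2) :=
          (Real.sqrt_sq_eq_abs _).symm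
      _ ≤ _ := Real.sqrt_le_sqrt hsq
  have := abs_le.mp habs
  have hX := Xabs_le (X := X) hN j n
  have := abs_le.mp hX
  linarith [this.1, this.2]

lemma alpha_bound1 (hN₀ : 0 < N₀) (hN₁ : 0 < N₁) (hN : 0 < N)
    (hl₁ : 0 < lam₁) (hl₂ : 0 < lam₂) (hθ0 : 0 ≤ θ) :
    θ / lam₁ + Real.sqrt (θ / lam₂) * Xcol1 X ≤ alphaC N N₀ N₁ lam₁ lam₂ θ X := by
  refine le_trans ?_ (le_max_left _ _)
  have h1 : Real.sqrt (θ / lam₂) ≤ Real.sqrt ((N₁ : ℝ) * (N₀ : ℝ) * θ / lam₂) := by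
    apply Real.sqrt_le_sqrt
    have hA : (1:ℝ) ≤ (N₁ : ℝ) := by exact_mod_cast hN₁
    have hB : (1:ℝ) ≤ (N₀ : ℝ) := by exact_mod_cast hN₀
    have h11 : (1:ℝ) ≤ (N₁ : ℝ) * (N₀ : ℝ) := by nlinarith
    have : θ ≤ (N₁ : ℝ) * (N₀ : ℝ) * θ := by nlinarith [mul_le_mul_of_nonneg_right h11 hθ0]
    gcongr
  have := mul_le_mul_of_nonneg_right h1 (Xcol1_nonneg (X := X) hN)
  linarith

lemma alpha_bound2 (hN₀ : 0 < N₀) (hN₁ : 0 < N₁) (hN : 0 < N)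
    (hl₁ : 0 < lam₁) (hl₂ : 0 < lam₂) (hθ0 : 0 ≤ θ) :
    Real.sqrt ((N : ℝ) * θ) + Xcol1 X + Real.sqrt (θ / lam₂) * (θ / lam₁)
      ≤ alphaC N N₀ N₁ lam₁ lam₂ θ X := by
  refine le_trans ?_ (le_max_right _ _)
  have key : Real.sqrt (θ / lam₂) * (θ / lam₁)
      ≤ θ * Real.sqrt ((N₁ : ℝ) * (N₀ : ℝ) * θ) / (lam₁ * Real.sqrt lam₂) := by
    rw [Real.sqrt_div hθ0, div_mul_div_comm, mul_comm (Real.sqrt lam₂) lam₁]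
    have h1 : Real.sqrt θ ≤ Real.sqrt ((N₁ : ℝ) * (N₀ : ℝ) * θ) := by
      apply Real.sqrt_le_sqrt
      have hA : (1:ℝ) ≤ (N₁ : ℝ) := by exact_mod_cast hN₁
      have hB : (1:ℝ) ≤ (N₀ : ℝ) := by exact_mod_cast hN₀
      have h12 : (1:ℝ) ≤ (N₁ : ℝ) * (N₀ : ℝ) := by nlinarith
      nlinarith [mul_le_mul_of_nonneg_right h12 hθ0]
    have hnum : Real.sqrt θ * θ ≤ θ * Real.sqrt ((N₁ : ℝ) * (N₀ : ℝ) * θ) := by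
      nlinarith [mul_le_mul_of_nonneg_left h1 hθ0, Real.sqrt_nonneg θ]
    have hd : (0:ℝ) < lam₁ * Real.sqrt lam₂ := by positivity
    exact div_le_div_of_nonneg_right hnum hd.le
  linarith

lemma alpha_pos (hN₀ : 0 < N₀) (hN₁ : 0 < N₁) (hN : 0 < N)
    (hl₁ : 0 < lam₁) (hl₂ : 0 < lam₂) (hθ0 : 0 < θ) :
    0 < alphaC N N₀ N₁ lam₁ lam₂ θ X := by
  have h := alpha_bound1 (X := X) hN₀ hN₁ hN hl₁ hl₂ hθ0.le
  have h2 : 0 < θ / lam₁ := by positivity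
  have h3 : 0 ≤ Real.sqrt (θ / lam₂) * Xcol1 X :=
    mul_nonneg (Real.sqrt_nonneg _) (Xcol1_nonneg hN)
  linarith

lemma b1_le (hN₀ : 0 < N₀) (hN₁ : 0 < N₁) (hN : 0 < N)
    (hl₁ : 0 < lam₁) (hl₂ : 0 < lam₂) (hθ0 : 0 ≤ θ) {z : Pt N N₀ N₁}
    (hz : z ∈ Omega2 X)
    (hv : lam₁ * (∑ n, ∑ i, z.2.2.2 i n) ≤ θ)
    (hW : lam₂ * (∑ i, ∑ j, (z.1 i j) ^ 2) ≤ θ) (i : Fin N₁) :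
    z.2.1 i ≤ alphaC N N₀ N₁ lam₁ lam₂ θ X := by
  have n : Fin N := ⟨0, hN⟩
  have h1 : preact X z i n ≤ θ / lam₁ :=
    le_trans (le_relu _) (le_trans (hz i n) (v_le hl₁ hz hv i n))
  have h2 := abs_le.mp (SWx_le (X := X) hN hl₂ hW i n)
  have h3 := alpha_bound1 (X := X) hN₀ hN₁ hN hl₁ hl₂ hθ0
  unfold preact at h1
  linarith [h2.1, h2.2]

lemma b2_le (hN₀ : 0 < N₀) (hN₁ : 0 < N₁) (hN : 0 < N)
    (hl₁ : 0 < lam₁) (hl₂ : 0 < lam₂) (hθ0 : 0 ≤ θ) {z : Pt N N₀ N₁}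
    (hz : z ∈ Omega2 X) (hF : Fv X z ≤ θ)
    (hv : lam₁ * (∑ n, ∑ i, z.2.2.2 i n) ≤ θ)
    (hW : lam₂ * (∑ i, ∑ j, (z.1 i j) ^ 2) ≤ θ) (j : Fin N₀) :
    z.2.2.1 j ≤ alphaC N N₀ N₁ lam₁ lam₂ θ X := by
  have n : Fin N := ⟨0, hN⟩
  have h1 : outPre z j n ≤ Real.sqrt ((N : ℝ) * θ) + Xcol1 X :=
    le_trans (le_relu _) (reluOut_le hN hθ0 hF j n)
  have h2 := abs_le.mp (SWv_le (X := X) hl₁ hl₂ hz hv hW j n)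
  have h3 := alpha_bound2 (X := X) hN₀ hN₁ hN hl₁ hl₂ hθ0
  unfold outPre at h1
  linarith [h2.1, h2.2]

/-- clamping `b₁, b₂` from below at `-α` preserves the relu values and the objective. -/
lemma clamp_spec (hN : 0 < N) (hN₀ : 0 < N₀) (hN₁ : 0 < N₁)
    (hl₁ : 0 < lam₁) (hl₂ : 0 < lam₂) (hβ : 0 < β) (hθ0 : 0 < θ)
    {w : Pt N N₀ N₁} (hw : w ∈ Omega2 X) (hO : Ov lam₁ lam₂ β X w ≤ θ) :
    ∃ w' : Pt N N₀ N₁, w' ∈ Zset lam₁ lam₂ θ X ∧ Ov lam₁ lam₂ β X w' = Ov lam₁ lam₂ β X w := by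
  set α := alphaC N N₀ N₁ lam₁ lam₂ θ X with hα
  obtain ⟨hF, hv, hW⟩ := level_bounds hβ hl₁ hl₂ hw hO
  have hαpos : 0 < α := alpha_pos (X := X) hN₀ hN₁ hN hl₁ hl₂ hθ0
  have hSx : ∀ i n, |∑ j, w.1 i j * X j n| ≤ α := fun i n =>
    le_trans (SWx_le (X := X) hN hl₂ hW i n) (by
      have := alpha_bound1 (X := X) hN₀ hN₁ hN hl₁ hl₂ hθ0.le
      have : (0:ℝ) ≤ θ / lam₁ := by positivity
      linarith [alpha_bound1 (X := X) hN₀ hN₁ hN hl₁ hl₂ hθ0.le])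
  have hSv : ∀ j n, |∑ i, w.1 i j * w.2.2.2 i n| ≤ α := fun j n =>
    le_trans (SWv_le (X := X) hl₁ hl₂ hw hv hW j n) (by
      have h2 := alpha_bound2 (X := X) hN₀ hN₁ hN hl₁ hl₂ hθ0.le
      have h3 : (0:ℝ) ≤ Real.sqrt ((N : ℝ) * θ) := Real.sqrt_nonneg _
      have h4 := Xcol1_nonneg (X := X) hN
      linarith)
  set w' : Pt N N₀ N₁ :=
    (w.1, fun i => max (w.2.1 i) (-α), fun j => max (w.2.2.1 j) (-α), w.2.2.2) with hw'
  have hrelu_pre : ∀ i n, relu (preact X w' i n) = relu (preact X w i n) := by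
    intro i n
    rcases le_or_gt (-α) (w.2.1 i) with h | h
    · unfold preact
      rw [hw']
      simp [max_eq_left h]
    · have hS := abs_le.mp (hSx i n)
      have e1 : preact X w i n ≤ 0 := by unfold preact; linarith [hS.2]
      have e2 : preact X w' i n ≤ 0 := by
        unfold preact; rw [hw']; simp only
        rw [max_eq_right h.le]
        linarith [hS.2]
      rw [relu_of_nonpos e1, relu_of_nonpos e2]
  have hrelu_out : ∀ j n, relu (outPre w' j n) = relu (outPre w j n) := by
    intro j n
    rcases le_or_gt (-α) (w.2.2.1 j) with h | h
    · unfold outPre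
      rw [hw']
      simp [max_eq_left h]
    · have hS := abs_le.mp (hSv j n)
      have e1 : outPre w j n ≤ 0 := by unfold outPre; linarith [hS.2]
      have e2 : outPre w' j n ≤ 0 := by
        unfold outPre; rw [hw']; simp only
        rw [max_eq_right h.le]
        linarith [hS.2]
      rw [relu_of_nonpos e1, relu_of_nonpos e2]
  refine ⟨(w.1, fun i => max (w.2.1 i) (-α), fun j => max (w.2.2.1 j) (-α), w.2.2.2), ?_, ?_⟩
  · constructor
    · intro i n
      rw [show (w.1, fun i => max (w.2.1 i) (-α), fun j => max (w.2.2.1 j) (-α), w.2.2.2) = w' from rfl]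
      rw [hrelu_pre i n]
      exact hw i n
    · constructor
      · intro i
        rw [abs_le]
        constructor
        · simp only
          exact le_trans (le_refl _) (le_max_right _ _)
        · simp only
          exact max_le (b1_le hN₀ hN₁ hN hl₁ hl₂ hθ0.le hw hv hW i) (by linarith)
      · intro j
        rw [abs_le]
        constructor
        · simp only
          exact le_trans (le_refl _) (le_max_right _ _)
        · simp only
          exact max_le (b2_le hN₀ hN₁ hN hl₁ hl₂ hθ0.le hw hF hv hW j) (by linarith)
  · rw [show (w.1, fun i => max (w.2.1 i) (-α), fun j => max (w.2.2.1 j) (-α), w.2.2.2) = w' from rfl]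
    have hFv : Fv X w' = Fv X w := by
      unfold Fv
      congr 1
      refine Finset.sum_congr rfl fun n _ => Finset.sum_congr rfl fun j _ => ?_
      rw [hrelu_out j n]
    have hPv : Pv β X w' = Pv β X w := by
      unfold Pv
      congr 1
      refine Finset.sum_congr rfl fun n _ => Finset.sum_congr rfl fun i _ => ?_
      rw [hrelu_pre i n]
    have hRv : Rv lam₁ lam₂ w' = Rv lam₁ lam₂ w := rfl
    unfold Ov
    rw [hFv, hPv, hRv]

lemma cont_Ov : Continuous (Ov lam₁ lam₂ β X : Pt N N₀ N₁ → ℝ) := by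
  unfold Ov Fv Rv Pv relu outPre preact; fun_prop

lemma isClosed_Omega2 : IsClosed (Omega2 X : Set (Pt N N₀ N₁)) := by
  have : (Omega2 X : Set (Pt N N₀ N₁)) =
      ⋂ i, ⋂ n, {z : Pt N N₀ N₁ | relu (preact X z i n) ≤ z.2.2.2 i n} := by
    ext z; simp [Omega2, Set.mem_iInter]
  rw [this]
  refine isClosed_iInter fun i => isClosed_iInter fun n => isClosed_le ?_ ?_
  · unfold relu preact; fun_prop
  · fun_prop

lemma isClosed_Omega3 : IsClosed (Omega3 lam₁ lam₂ θ X : Set (Pt N N₀ N₁)) := by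
  have : (Omega3 lam₁ lam₂ θ X : Set (Pt N N₀ N₁)) =
      (⋂ i, {z : Pt N N₀ N₁ | |z.2.1 i| ≤ alphaC N N₀ N₁ lam₁ lam₂ θ X}) ∩
      (⋂ j, {z : Pt N N₀ N₁ | |z.2.2.1 j| ≤ alphaC N N₀ N₁ lam₁ lam₂ θ X}) := by
    ext z; simp [Omega3, Set.mem_iInter]
  rw [this]
  refine IsClosed.inter (isClosed_iInter fun i => isClosed_le (by fun_prop) continuous_const)
    (isClosed_iInter fun j => isClosed_le (by fun_prop) continuous_const)

lemma Ov_zero (hN : 0 < N) :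
    Ov lam₁ lam₂ β X (0 : Pt N N₀ N₁) = (1 / (N : ℝ)) * ∑ j, ∑ n, (X j n) ^ 2 := by
  unfold Ov Fv Rv Pv relu outPre preact
  simp only [Prod.fst_zero, Prod.snd_zero, Pi.zero_apply, Matrix.zero_apply, zero_mul,
    Finset.sum_const_zero, add_zero, zero_add, max_self, zero_sub, neg_sq, mul_zero,
    ne_eq, zero_pow, sub_zero]
  rw [Finset.sum_comm]
  simp
theorem stmt4 (N N₀ N₁ : ℕ) (hN : 0 < N) (hN₀ : 0 < N₀) (hN₁ : 0 < N₁)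
    (lam₁ lam₂ β θ : ℝ) (hlam₁ : 0 < lam₁) (hlam₂ : 0 < lam₂) (hbeta : 0 < β)
    (X : Matrix (Fin N₀) (Fin N) ℝ)
    (hθ : (1 / (N : ℝ)) * ∑ j, ∑ n, (X j n) ^ 2 < θ) :
    (∃ z : Pt N N₀ N₁, z ∈ Zset lam₁ lam₂ θ X ∧
       ∀ w : Pt N N₀ N₁, w ∈ Zset lam₁ lam₂ θ X → Ov lam₁ lam₂ β X z ≤ Ov lam₁ lam₂ β X w) ∧
    (∃ M : ℝ, ∀ z : Pt N N₀ N₁, z ∈ Zset lam₁ lam₂ θ X →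
       (∀ w : Pt N N₀ N₁, w ∈ Zset lam₁ lam₂ θ X → Ov lam₁ lam₂ β X z ≤ Ov lam₁ lam₂ β X w) →
       normPt z ≤ M) ∧
    (∀ z : Pt N N₀ N₁, z ∈ Zset lam₁ lam₂ θ X →
       (∀ w : Pt N N₀ N₁, w ∈ Zset lam₁ lam₂ θ X → Ov lam₁ lam₂ β X z ≤ Ov lam₁ lam₂ β X w) →
       ∀ w : Pt N N₀ N₁, w ∈ Omega2 X → Ov lam₁ lam₂ β X z ≤ Ov lam₁ lam₂ β X w) := by
  have hθ0 : 0 < θ := lt_of_le_of_lt (by positivity) hθ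
  have hαpos : 0 < alphaC N N₀ N₁ lam₁ lam₂ θ X :=
    alpha_pos (X := X) hN₀ hN₁ hN hlam₁ hlam₂ hθ0
  set α := alphaC N N₀ N₁ lam₁ lam₂ θ X with hαdef
  have hOv0 : Ov lam₁ lam₂ β X (0 : Pt N N₀ N₁) < θ := by rw [Ov_zero hN]; exact hθ
  have h0Z : (0 : Pt N N₀ N₁) ∈ Zset lam₁ lam₂ θ X := by
    refine ⟨fun i n => ?_, fun i => ?_, fun j => ?_⟩
    · have h1 : preact X (0 : Pt N N₀ N₁) i n = 0 := by unfold preact; simp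
      have h2 : (0 : Pt N N₀ N₁).2.2.2 i n = 0 := rfl
      rw [h1, h2, relu_of_nonpos le_rfl]
    · simpa using hαpos.le
    · simpa using hαpos.le
  -- existence of a minimizer over Z via compactness of the level set
  set K : Set (Pt N N₀ N₁) :=
    Zset lam₁ lam₂ θ X ∩ {z | Ov lam₁ lam₂ β X z ≤ θ} with hKdef
  have h0K : (0 : Pt N N₀ N₁) ∈ K := ⟨h0Z, hOv0.le⟩
  have hKcl : IsClosed K :=
    ((isClosed_Omega2.inter isClosed_Omega3).inter (isClosed_le cont_Ov continuous_const))
  set S : Set (Pt N N₀ N₁) :=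
    (Set.univ.pi fun _ : Fin N₁ => Set.univ.pi fun _ : Fin N₀ =>
        Set.Icc (-(Real.sqrt (θ / lam₂))) (Real.sqrt (θ / lam₂))) ×ˢ
      ((Set.univ.pi fun _ : Fin N₁ => Set.Icc (-α) α) ×ˢ
        ((Set.univ.pi fun _ : Fin N₀ => Set.Icc (-α) α) ×ˢ
          (Set.univ.pi fun _ : Fin N₁ => Set.univ.pi fun _ : Fin N =>
            Set.Icc (0:ℝ) (θ / lam₁)))) with hSdef
  have hScomp : IsCompact S :=
    ((isCompact_univ_pi fun _ => isCompact_univ_pi fun _ => isCompact_Icc).prod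
      ((isCompact_univ_pi fun _ => isCompact_Icc).prod
        ((isCompact_univ_pi fun _ => isCompact_Icc).prod
          (isCompact_univ_pi fun _ => isCompact_univ_pi fun _ => isCompact_Icc))))
  have hKS : K ⊆ S := by
    rintro z ⟨⟨hz2, hz3⟩, hzO⟩
    obtain ⟨hF, hv, hW⟩ := level_bounds hbeta hlam₁ hlam₂ hz2 hzO
    refine ⟨?_, ?_, ?_, ?_⟩
    · intro i _; intro j _
      exact abs_le.mp (W_le hlam₂ hW i j) |>.imp id id |> fun h => Set.mem_Icc.mpr h
    · intro i _
      exact Set.mem_Icc.mpr (abs_le.mp (hz3.1 i))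
    · intro j _
      exact Set.mem_Icc.mpr (abs_le.mp (hz3.2 j))
    · intro i _; intro n _
      exact Set.mem_Icc.mpr ⟨v_nonneg hz2 i n, v_le hlam₁ hz2 hv i n⟩
  have hKcomp : IsCompact K := hScomp.of_isClosed_subset hKcl hKS
  obtain ⟨zs, hzsK, hzsmin⟩ :=
    hKcomp.exists_isMinOn (f := Ov lam₁ lam₂ β X) ⟨0, h0K⟩ (cont_Ov.continuousOn)
  rw [isMinOn_iff] at hzsmin
  have hminZ : ∀ w : Pt N N₀ N₁, w ∈ Zset lam₁ lam₂ θ X →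
      Ov lam₁ lam₂ β X zs ≤ Ov lam₁ lam₂ β X w := by
    intro w hwZ
    by_cases hOw : Ov lam₁ lam₂ β X w ≤ θ
    · exact hzsmin w ⟨hwZ, hOw⟩
    · have := hzsmin 0 h0K
      linarith
  refine ⟨⟨zs, hzsK.1, hminZ⟩, ?_, ?_⟩
  · -- boundedness of minimizers
    refine ⟨Real.sqrt (θ / lam₂ + N₁ * α ^ 2 + N₀ * α ^ 2 + (θ / lam₁) ^ 2), ?_⟩
    intro z hzZ hzmin
    have hOz : Ov lam₁ lam₂ β X z ≤ θ := le_trans (hzmin 0 h0Z) hOv0.le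
    obtain ⟨hF, hv, hW⟩ := level_bounds hbeta hlam₁ hlam₂ hzZ.1 hOz
    have hWs : ∑ i, ∑ j, (z.1 i j) ^ 2 ≤ θ / lam₂ := (le_div_iff₀' hlam₂).mpr hW
    have hb1 : ∑ i, (z.2.1 i) ^ 2 ≤ (N₁ : ℝ) * α ^ 2 := by
      calc ∑ i, (z.2.1 i) ^ 2 ≤ ∑ _i : Fin N₁, α ^ 2 := by
            refine Finset.sum_le_sum fun i _ => ?_
            have h := abs_le.mp (hzZ.2.1 i)
            exact sq_le_sq' h.1 h.2
        _ = (N₁ : ℝ) * α ^ 2 := by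
            simp [Finset.sum_const, Finset.card_univ, nsmul_eq_mul]
    have hb2 : ∑ j, (z.2.2.1 j) ^ 2 ≤ (N₀ : ℝ) * α ^ 2 := by
      calc ∑ j, (z.2.2.1 j) ^ 2 ≤ ∑ _j : Fin N₀, α ^ 2 := by
            refine Finset.sum_le_sum fun j _ => ?_
            have h := abs_le.mp (hzZ.2.2 j)
            exact sq_le_sq' h.1 h.2
        _ = (N₀ : ℝ) * α ^ 2 := by
            simp [Finset.sum_const, Finset.card_univ, nsmul_eq_mul]
    have hvs : ∑ i, ∑ n, (z.2.2.2 i n) ^ 2 ≤ (θ / lam₁) ^ 2 := by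
      calc ∑ i, ∑ n, (z.2.2.2 i n) ^ 2 ≤ ∑ i, ∑ n, (θ / lam₁) * z.2.2.2 i n := by
            refine Finset.sum_le_sum fun i _ => Finset.sum_le_sum fun n _ => ?_
            nlinarith [v_nonneg hzZ.1 i n, v_le hlam₁ hzZ.1 hv i n]
        _ = (θ / lam₁) * ∑ i, ∑ n, z.2.2.2 i n := by simp [Finset.mul_sum]
        _ = (θ / lam₁) * ∑ n, ∑ i, z.2.2.2 i n := by rw [Finset.sum_comm]
        _ ≤ (θ / lam₁) * (θ / lam₁) := by
            have h := (le_div_iff₀' hlam₁).mpr hv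
            have : (0:ℝ) ≤ θ / lam₁ := by positivity
            nlinarith
        _ = (θ / lam₁) ^ 2 := (sq _).symm
    have hsq : sqnormPt z ≤ θ / lam₂ + N₁ * α ^ 2 + N₀ * α ^ 2 + (θ / lam₁) ^ 2 := by
      unfold sqnormPt; push_cast; linarith
    calc normPt z = Real.sqrt (sqnormPt z) := rfl
      _ ≤ _ := Real.sqrt_le_sqrt hsq
  · -- minimizers over Z are minimizers over Ω₂
    intro z hzZ hzmin w hw2
    have hOz : Ov lam₁ lam₂ β X z ≤ Ov lam₁ lam₂ β X 0 := hzmin 0 h0Z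
    by_cases hOw : Ov lam₁ lam₂ β X w ≤ θ
    · obtain ⟨w', hw'Z, hw'eq⟩ := clamp_spec hN hN₀ hN₁ hlam₁ hlam₂ hbeta hθ0 hw2 hOw
      rw [← hw'eq]
      exact hzmin w' hw'Z
    · linarith
end
end

section
/- The functions F and R are Lipschitz continuous on the level set Ω_θ: there exist constants L_F ≥ 0 and L_R ≥ 0 such that |F(z) − F(z′)| ≤ L_F‖z − z′‖₂ and |R(z) − R(z′)| ≤ L_R‖z − z′‖₂ for all z, z′ ∈ Ω_θ. -/
open scoped BigOperators

noncomputable section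

variable {N N₀ N₁ : ℕ}

private lemma sq_le_sum2 {a b : ℕ} (f : Fin a → Fin b → ℝ) (i : Fin a) (j : Fin b) :
    f i j ^ 2 ≤ ∑ i', ∑ j', f i' j' ^ 2 := by
  have h1 : f i j ^ 2 ≤ ∑ j', f i j' ^ 2 :=
    Finset.single_le_sum (f := fun j' => f i j' ^ 2) (fun _ _ => sq_nonneg _)
      (Finset.mem_univ j)
  have h2 : (∑ j', f i j' ^ 2) ≤ ∑ i', ∑ j', f i' j' ^ 2 :=
    Finset.single_le_sum (f := fun i' => ∑ j', f i' j' ^ 2)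
      (fun _ _ => Finset.sum_nonneg fun _ _ => sq_nonneg _) (Finset.mem_univ i)
  linarith

private lemma entry_le_sum2 {a b : ℕ} (f : Fin a → Fin b → ℝ) (hf : ∀ i j, 0 ≤ f i j)
    (i : Fin a) (j : Fin b) : f i j ≤ ∑ i', ∑ j', f i' j' := by
  have h1 : f i j ≤ ∑ j', f i j' :=
    Finset.single_le_sum (f := fun j' => f i j') (fun _ _ => hf i _) (Finset.mem_univ j)
  have h2 : (∑ j', f i j') ≤ ∑ i', ∑ j', f i' j' :=
    Finset.single_le_sum (f := fun i' => ∑ j', f i' j')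
      (fun _ _ => Finset.sum_nonneg fun _ _ => hf _ _) (Finset.mem_univ i)
  linarith

private lemma sqnorm_sub (z z' : Pt N N₀ N₁) :
    sqnormPt (z - z') =
      (∑ i, ∑ j, (z.1 i j - z'.1 i j) ^ 2) + (∑ i, (z.2.1 i - z'.2.1 i) ^ 2)
        + (∑ j, (z.2.2.1 j - z'.2.2.1 j) ^ 2)
        + (∑ i, ∑ n, (z.2.2.2 i n - z'.2.2.2 i n) ^ 2) := rfl

private lemma distPt_nonneg (z z' : Pt N N₀ N₁) : 0 ≤ distPt z z' := Real.sqrt_nonneg _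

private lemma abs_le_dist_of_sq (z z' : Pt N N₀ N₁) {a : ℝ}
    (h : a ^ 2 ≤ sqnormPt (z - z')) : |a| ≤ distPt z z' := by
  rw [distPt, normPt, ← Real.sqrt_sq_eq_abs]
  exact Real.sqrt_le_sqrt h

private lemma coordW (z z' : Pt N N₀ N₁) (i : Fin N₁) (j : Fin N₀) :
    |z.1 i j - z'.1 i j| ≤ distPt z z' := by
  apply abs_le_dist_of_sq
  rw [sqnorm_sub]
  have h := sq_le_sum2 (fun i j => z.1 i j - z'.1 i j) i j
  have h2 : (0:ℝ) ≤ ∑ i, (z.2.1 i - z'.2.1 i) ^ 2 := Finset.sum_nonneg fun _ _ => sq_nonneg _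
  have h3 : (0:ℝ) ≤ ∑ j, (z.2.2.1 j - z'.2.2.1 j) ^ 2 := Finset.sum_nonneg fun _ _ => sq_nonneg _
  have h4 : (0:ℝ) ≤ ∑ i, ∑ n, (z.2.2.2 i n - z'.2.2.2 i n) ^ 2 :=
    Finset.sum_nonneg fun _ _ => Finset.sum_nonneg fun _ _ => sq_nonneg _
  simpa using by linarith [h]

private lemma coordB2 (z z' : Pt N N₀ N₁) (j : Fin N₀) :
    |z.2.2.1 j - z'.2.2.1 j| ≤ distPt z z' := by
  apply abs_le_dist_of_sq
  rw [sqnorm_sub]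
  have h : (z.2.2.1 j - z'.2.2.1 j) ^ 2 ≤ ∑ j', (z.2.2.1 j' - z'.2.2.1 j') ^ 2 :=
    Finset.single_le_sum (f := fun j' => (z.2.2.1 j' - z'.2.2.1 j') ^ 2)
      (fun _ _ => sq_nonneg _) (Finset.mem_univ j)
  have h1 : (0:ℝ) ≤ ∑ i, ∑ j, (z.1 i j - z'.1 i j) ^ 2 :=
    Finset.sum_nonneg fun _ _ => Finset.sum_nonneg fun _ _ => sq_nonneg _
  have h2 : (0:ℝ) ≤ ∑ i, (z.2.1 i - z'.2.1 i) ^ 2 := Finset.sum_nonneg fun _ _ => sq_nonneg _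
  have h4 : (0:ℝ) ≤ ∑ i, ∑ n, (z.2.2.2 i n - z'.2.2.2 i n) ^ 2 :=
    Finset.sum_nonneg fun _ _ => Finset.sum_nonneg fun _ _ => sq_nonneg _
  linarith

private lemma coordV (z z' : Pt N N₀ N₁) (i : Fin N₁) (n : Fin N) :
    |z.2.2.2 i n - z'.2.2.2 i n| ≤ distPt z z' := by
  apply abs_le_dist_of_sq
  rw [sqnorm_sub]
  have h := sq_le_sum2 (fun i n => z.2.2.2 i n - z'.2.2.2 i n) i n
  have h1 : (0:ℝ) ≤ ∑ i, ∑ j, (z.1 i j - z'.1 i j) ^ 2 :=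
    Finset.sum_nonneg fun _ _ => Finset.sum_nonneg fun _ _ => sq_nonneg _
  have h2 : (0:ℝ) ≤ ∑ i, (z.2.1 i - z'.2.1 i) ^ 2 := Finset.sum_nonneg fun _ _ => sq_nonneg _
  have h3 : (0:ℝ) ≤ ∑ j, (z.2.2.1 j - z'.2.2.1 j) ^ 2 := Finset.sum_nonneg fun _ _ => sq_nonneg _
  simpa using by linarith [h]

private lemma lev_bounds {lam₁ lam₂ β θ : ℝ} (hN : 0 < N)
    (hlam₁ : 0 < lam₁) (hlam₂ : 0 < lam₂) (hbeta : 0 < β) (hθ : 0 < θ)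
    {X : Matrix (Fin N₀) (Fin N) ℝ} {z : Pt N N₀ N₁}
    (hz : z ∈ OmegaLev lam₁ lam₂ β θ X) :
    (∀ i n, 0 ≤ z.2.2.2 i n ∧ z.2.2.2 i n ≤ θ / lam₁) ∧
    (∀ i j, |z.1 i j| ≤ Real.sqrt (θ / lam₂)) ∧
    (∀ j n, |relu (outPre z j n) - X j n| ≤ Real.sqrt ((N : ℝ) * θ)) := by
  obtain ⟨h2, hO⟩ := hz
  have hvnn : ∀ i n, 0 ≤ z.2.2.2 i n := fun i n =>
    le_trans (le_max_right _ 0) (h2 i n)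
  have hSvnn : 0 ≤ ∑ n, ∑ i, z.2.2.2 i n :=
    Finset.sum_nonneg fun n _ => Finset.sum_nonneg fun i _ => hvnn i n
  have hSWnn : 0 ≤ ∑ i, ∑ j, (z.1 i j) ^ 2 :=
    Finset.sum_nonneg fun _ _ => Finset.sum_nonneg fun _ _ => sq_nonneg _
  have hSFnn : 0 ≤ ∑ n, ∑ j, (relu (outPre z j n) - X j n) ^ 2 :=
    Finset.sum_nonneg fun _ _ => Finset.sum_nonneg fun _ _ => sq_nonneg _
  have hNpos : (0:ℝ) < (N:ℝ) := Nat.cast_pos.2 hN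
  have hFnn : 0 ≤ Fv X z := mul_nonneg (by positivity) hSFnn
  have hPnn : 0 ≤ Pv β X z :=
    mul_nonneg hbeta.le (Finset.sum_nonneg fun n _ => Finset.sum_nonneg fun i _ =>
      sub_nonneg.2 (h2 i n))
  rw [Ov, Rv] at hO
  have hR1nn : 0 ≤ lam₁ * ∑ n, ∑ i, z.2.2.2 i n := mul_nonneg hlam₁.le hSvnn
  have hR2nn : 0 ≤ lam₂ * ∑ i, ∑ j, (z.1 i j) ^ 2 := mul_nonneg hlam₂.le hSWnn
  have hF : Fv X z ≤ θ := by linarith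
  have hv : lam₁ * (∑ n, ∑ i, z.2.2.2 i n) ≤ θ := by linarith
  have hW : lam₂ * (∑ i, ∑ j, (z.1 i j) ^ 2) ≤ θ := by linarith
  have hSvle : (∑ n, ∑ i, z.2.2.2 i n) ≤ θ / lam₁ := by
    rw [le_div_iff₀ hlam₁]; nlinarith
  have hSWle : (∑ i, ∑ j, (z.1 i j) ^ 2) ≤ θ / lam₂ := by
    rw [le_div_iff₀ hlam₂]; nlinarith
  refine ⟨fun i n => ⟨hvnn i n, ?_⟩, fun i j => ?_, fun j n => ?_⟩
  · exact le_trans (entry_le_sum2 (fun n i => z.2.2.2 i n) (fun n i => hvnn i n) n i) hSvle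
  · rw [← Real.sqrt_sq_eq_abs]
    exact Real.sqrt_le_sqrt (le_trans (sq_le_sum2 (fun i j => z.1 i j) i j) hSWle)
  · have hS : (∑ n, ∑ j, (relu (outPre z j n) - X j n) ^ 2) ≤ (N : ℝ) * θ := by
      rw [Fv] at hF
      have hmul := mul_le_mul_of_nonneg_left hF hNpos.le
      have hcan : (N:ℝ) * (1 / (N:ℝ) * ∑ n, ∑ j, (relu (outPre z j n) - X j n) ^ 2)
          = ∑ n, ∑ j, (relu (outPre z j n) - X j n) ^ 2 := by
        field_simp
      linarith [hmul, hcan.ge, hcan.le]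
    rw [← Real.sqrt_sq_eq_abs]
    exact Real.sqrt_le_sqrt
      (le_trans (sq_le_sum2 (fun n j => relu (outPre z j n) - X j n) n j) hS)

theorem stmt5 (N N₀ N₁ : ℕ) (hN : 0 < N) (hN₀ : 0 < N₀) (hN₁ : 0 < N₁)
    (lam₁ lam₂ β θ : ℝ) (hlam₁ : 0 < lam₁) (hlam₂ : 0 < lam₂) (hbeta : 0 < β)
    (X : Matrix (Fin N₀) (Fin N) ℝ)
    (hθ : (1 / (N : ℝ)) * ∑ j, ∑ n, (X j n) ^ 2 < θ) :
    ∃ LF LR : ℝ, 0 ≤ LF ∧ 0 ≤ LR ∧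
      ∀ z : Pt N N₀ N₁, z ∈ OmegaLev lam₁ lam₂ β θ X →
      ∀ z' : Pt N N₀ N₁, z' ∈ OmegaLev lam₁ lam₂ β θ X →
        |Fv X z - Fv X z'| ≤ LF * distPt z z' ∧
        |Rv lam₁ lam₂ z - Rv lam₁ lam₂ z'| ≤ LR * distPt z z' := by
  have hθ0 : (0:ℝ) < θ := lt_of_le_of_lt (by positivity) hθ
  have hNpos : (0:ℝ) < (N:ℝ) := Nat.cast_pos.2 hN
  set CW := Real.sqrt (θ / lam₂) with hCWdef
  set CV := θ / lam₁ with hCVdef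
  set s := Real.sqrt ((N : ℝ) * θ) with hsdef
  set K := (N₁ : ℝ) * (CW + CV) + 1 with hKdef
  have hCW : 0 ≤ CW := Real.sqrt_nonneg _
  have hCV : 0 ≤ CV := (div_pos hθ0 hlam₁).le
  have hs : 0 ≤ s := Real.sqrt_nonneg _
  have hK : 0 ≤ K :=
    add_nonneg (mul_nonneg (Nat.cast_nonneg _) (add_nonneg hCW hCV)) zero_le_one
  refine ⟨2 * (N₀ : ℝ) * s * K, lam₁ * (N : ℝ) * (N₁ : ℝ) + 2 * lam₂ * (N₁ : ℝ) * (N₀ : ℝ) * CW,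
    ?_, ?_, ?_⟩
  · have : (0:ℝ) ≤ 2 * (N₀ : ℝ) := by positivity
    exact mul_nonneg (mul_nonneg this hs) hK
  · have h1 : (0:ℝ) ≤ lam₁ * (N : ℝ) * (N₁ : ℝ) := by positivity
    have h2 : (0:ℝ) ≤ 2 * lam₂ * (N₁ : ℝ) * (N₀ : ℝ) := by positivity
    exact add_nonneg h1 (mul_nonneg h2 hCW)
  intro z hz z' hz'
  obtain ⟨hVz, hWz, hOz⟩ := lev_bounds hN hlam₁ hlam₂ hbeta hθ0 hz
  obtain ⟨hVz', hWz', hOz'⟩ := lev_bounds hN hlam₁ hlam₂ hbeta hθ0 hz'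
  set d := distPt z z' with hd
  have hd0 : 0 ≤ d := distPt_nonneg z z'
  have hWc : ∀ i j, |z.1 i j - z'.1 i j| ≤ d := coordW z z'
  have hb2c : ∀ j, |z.2.2.1 j - z'.2.2.1 j| ≤ d := coordB2 z z'
  have hVc : ∀ i n, |z.2.2.2 i n - z'.2.2.2 i n| ≤ d := coordV z z'
  have hout : ∀ j n, |outPre z j n - outPre z' j n| ≤ K * d := by
    intro j n
    have heq : outPre z j n - outPre z' j n =
        (∑ i, (z.1 i j * z.2.2.2 i n - z'.1 i j * z'.2.2.2 i n))
          + (z.2.2.1 j - z'.2.2.1 j) := by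
      rw [outPre, outPre, Finset.sum_sub_distrib]; ring
    rw [heq]
    have hterm : ∀ i : Fin N₁,
        |z.1 i j * z.2.2.2 i n - z'.1 i j * z'.2.2.2 i n| ≤ (CW + CV) * d := by
      intro i
      have hsplit : z.1 i j * z.2.2.2 i n - z'.1 i j * z'.2.2.2 i n
          = z.1 i j * (z.2.2.2 i n - z'.2.2.2 i n) + z'.2.2.2 i n * (z.1 i j - z'.1 i j) := by
        ring
      rw [hsplit]
      have h1 : |z.1 i j * (z.2.2.2 i n - z'.2.2.2 i n)| ≤ CW * d := by
        rw [abs_mul]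
        exact mul_le_mul (hWz i j) (hVc i n) (abs_nonneg _) hCW
      have h2 : |z'.2.2.2 i n * (z.1 i j - z'.1 i j)| ≤ CV * d := by
        rw [abs_mul]
        have hv' : |z'.2.2.2 i n| ≤ CV := by
          rw [abs_of_nonneg (hVz' i n).1]; exact (hVz' i n).2
        exact mul_le_mul hv' (hWc i j) (abs_nonneg _) hCV
      calc |z.1 i j * (z.2.2.2 i n - z'.2.2.2 i n) + z'.2.2.2 i n * (z.1 i j - z'.1 i j)|
          ≤ |z.1 i j * (z.2.2.2 i n - z'.2.2.2 i n)| + |z'.2.2.2 i n * (z.1 i j - z'.1 i j)| :=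
            abs_add_le _ _
        _ ≤ CW * d + CV * d := add_le_add h1 h2
        _ = (CW + CV) * d := by ring
    calc |(∑ i, (z.1 i j * z.2.2.2 i n - z'.1 i j * z'.2.2.2 i n))
            + (z.2.2.1 j - z'.2.2.1 j)|
        ≤ |∑ i, (z.1 i j * z.2.2.2 i n - z'.1 i j * z'.2.2.2 i n)|
            + |z.2.2.1 j - z'.2.2.1 j| := abs_add_le _ _
      _ ≤ (∑ i : Fin N₁, (CW + CV) * d) + d :=
          add_le_add ((Finset.abs_sum_le_sum_abs _ _).trans
            (Finset.sum_le_sum fun i _ => hterm i)) (hb2c j)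
      _ = K * d := by
          rw [Finset.sum_const, Finset.card_univ, Fintype.card_fin, nsmul_eq_mul, hKdef]
          ring
  have hpt : ∀ n (j : Fin N₀),
      |(relu (outPre z j n) - X j n) ^ 2 - (relu (outPre z' j n) - X j n) ^ 2|
        ≤ 2 * s * (K * d) := by
    intro n j
    set a := relu (outPre z j n) - X j n with hadef
    set b := relu (outPre z' j n) - X j n with hbdef
    have hab : |a - b| ≤ K * d := by
      have heq2 : a - b = max (outPre z j n) 0 - max (outPre z' j n) 0 := by
        rw [hadef, hbdef, relu, relu]; ring
      rw [heq2]
      exact (abs_max_sub_max_le_abs _ _ _).trans (hout j n)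
    have ha : |a| ≤ s := hOz j n
    have hb' : |b| ≤ s := hOz' j n
    have hsq : a ^ 2 - b ^ 2 = (a + b) * (a - b) := by ring
    rw [hsq, abs_mul]
    have habsum : |a + b| ≤ 2 * s := (abs_add_le a b).trans (by linarith)
    exact mul_le_mul habsum hab (abs_nonneg _) (by linarith)
  constructor
  · have heq : Fv X z - Fv X z' = (1 / (N:ℝ)) * ∑ n, ∑ j,
        ((relu (outPre z j n) - X j n) ^ 2 - (relu (outPre z' j n) - X j n) ^ 2) := by
      rw [Fv, Fv, ← mul_sub]
      congr 1
      rw [← Finset.sum_sub_distrib]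
      exact Finset.sum_congr rfl fun n _ => (Finset.sum_sub_distrib _ _).symm
    rw [heq, abs_mul, abs_of_nonneg (by positivity : (0:ℝ) ≤ 1 / (N:ℝ))]
    calc (1/(N:ℝ)) * |∑ n, ∑ j,
          ((relu (outPre z j n) - X j n) ^ 2 - (relu (outPre z' j n) - X j n) ^ 2)|
        ≤ (1/(N:ℝ)) * ∑ n : Fin N, ∑ j : Fin N₀, (2 * s * (K * d)) := by
          apply mul_le_mul_of_nonneg_left _ (by positivity)
          exact (Finset.abs_sum_le_sum_abs _ _).trans (Finset.sum_le_sum fun n _ =>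
            (Finset.abs_sum_le_sum_abs _ _).trans (Finset.sum_le_sum fun j _ => hpt n j))
      _ = 2 * (N₀ : ℝ) * s * K * d := by
          rw [Finset.sum_const, Finset.sum_const, Finset.card_univ, Finset.card_univ,
            Fintype.card_fin, Fintype.card_fin, nsmul_eq_mul, nsmul_eq_mul]
          field_simp
  · have e1 : ∑ n, ∑ i, (z.2.2.2 i n - z'.2.2.2 i n)
        = (∑ n, ∑ i, z.2.2.2 i n) - ∑ n, ∑ i, z'.2.2.2 i n := by
      rw [← Finset.sum_sub_distrib]
      exact Finset.sum_congr rfl fun n _ => Finset.sum_sub_distrib _ _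
    have e2 : ∑ i, ∑ j, ((z.1 i j) ^ 2 - (z'.1 i j) ^ 2)
        = (∑ i, ∑ j, (z.1 i j) ^ 2) - ∑ i, ∑ j, (z'.1 i j) ^ 2 := by
      rw [← Finset.sum_sub_distrib]
      exact Finset.sum_congr rfl fun i _ => Finset.sum_sub_distrib _ _
    have heq : Rv lam₁ lam₂ z - Rv lam₁ lam₂ z'
        = lam₁ * (∑ n, ∑ i, (z.2.2.2 i n - z'.2.2.2 i n))
          + lam₂ * (∑ i, ∑ j, ((z.1 i j) ^ 2 - (z'.1 i j) ^ 2)) := by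
      rw [Rv, Rv, e1, e2]; ring
    rw [heq]
    have hA : |∑ n, ∑ i, (z.2.2.2 i n - z'.2.2.2 i n)| ≤ (N : ℝ) * ((N₁ : ℝ) * d) := by
      calc |∑ n, ∑ i, (z.2.2.2 i n - z'.2.2.2 i n)|
          ≤ ∑ n : Fin N, ∑ i : Fin N₁, d :=
            (Finset.abs_sum_le_sum_abs _ _).trans (Finset.sum_le_sum fun n _ =>
              (Finset.abs_sum_le_sum_abs _ _).trans (Finset.sum_le_sum fun i _ => hVc i n))
        _ = (N : ℝ) * ((N₁ : ℝ) * d) := by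
            rw [Finset.sum_const, Finset.sum_const, Finset.card_univ, Finset.card_univ,
              Fintype.card_fin, Fintype.card_fin, nsmul_eq_mul, nsmul_eq_mul]
    have hB : |∑ i, ∑ j, ((z.1 i j) ^ 2 - (z'.1 i j) ^ 2)|
        ≤ (N₁ : ℝ) * ((N₀ : ℝ) * (2 * CW * d)) := by
      have hptW : ∀ (i : Fin N₁) (j : Fin N₀),
          |(z.1 i j) ^ 2 - (z'.1 i j) ^ 2| ≤ 2 * CW * d := by
        intro i j
        have hsq : (z.1 i j) ^ 2 - (z'.1 i j) ^ 2
            = (z.1 i j + z'.1 i j) * (z.1 i j - z'.1 i j) := by ring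
        rw [hsq, abs_mul]
        have h1 : |z.1 i j + z'.1 i j| ≤ 2 * CW :=
          (abs_add_le _ _).trans (by linarith [hWz i j, hWz' i j])
        exact mul_le_mul h1 (hWc i j) (abs_nonneg _) (by linarith)
      calc |∑ i, ∑ j, ((z.1 i j) ^ 2 - (z'.1 i j) ^ 2)|
          ≤ ∑ i : Fin N₁, ∑ j : Fin N₀, (2 * CW * d) :=
            (Finset.abs_sum_le_sum_abs _ _).trans (Finset.sum_le_sum fun i _ =>
              (Finset.abs_sum_le_sum_abs _ _).trans (Finset.sum_le_sum fun j _ => hptW i j))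
        _ = (N₁ : ℝ) * ((N₀ : ℝ) * (2 * CW * d)) := by
            rw [Finset.sum_const, Finset.sum_const, Finset.card_univ, Finset.card_univ,
              Fintype.card_fin, Fintype.card_fin, nsmul_eq_mul, nsmul_eq_mul]
    calc |lam₁ * (∑ n, ∑ i, (z.2.2.2 i n - z'.2.2.2 i n))
            + lam₂ * (∑ i, ∑ j, ((z.1 i j) ^ 2 - (z'.1 i j) ^ 2))|
        ≤ lam₁ * |∑ n, ∑ i, (z.2.2.2 i n - z'.2.2.2 i n)|
            + lam₂ * |∑ i, ∑ j, ((z.1 i j) ^ 2 - (z'.1 i j) ^ 2)| := by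
          refine (abs_add_le _ _).trans ?_
          rw [abs_mul, abs_mul, abs_of_pos hlam₁, abs_of_pos hlam₂]
      _ ≤ lam₁ * ((N : ℝ) * ((N₁ : ℝ) * d)) + lam₂ * ((N₁ : ℝ) * ((N₀ : ℝ) * (2 * CW * d))) :=
          add_le_add (mul_le_mul_of_nonneg_left hA hlam₁.le)
            (mul_le_mul_of_nonneg_left hB hlam₂.le)
      _ = (lam₁ * (N : ℝ) * (N₁ : ℝ) + 2 * lam₂ * (N₁ : ℝ) * (N₀ : ℝ) * CW) * d := by ring
end
end

section
/- For every z ∈ Ω₂, the Euclidean distance from z to the set Ω₁ satisfies β · dist(z, Ω₁) ≤ P(z). -/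
open scoped BigOperators

noncomputable section

variable {N N₀ N₁ : ℕ}

theorem stmt6 (N N₀ N₁ : ℕ) (hN : 0 < N) (hN₀ : 0 < N₀) (hN₁ : 0 < N₁)
    (β : ℝ) (hbeta : 0 < β) (X : Matrix (Fin N₀) (Fin N) ℝ)
    (z : Pt N N₀ N₁) (hz : z ∈ Omega2 X) :
    β * sInf {r : ℝ | ∃ z' : Pt N N₀ N₁, z' ∈ Omega1 X ∧ r = distPt z z'} ≤ Pv β X z := by
  set d : Fin N₁ → Fin N → ℝ := fun i n => z.2.2.2 i n - relu (preact X z i n) with hd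
  have hdnn : ∀ i n, 0 ≤ d i n := fun i n => sub_nonneg.2 (hz i n)
  set z' : Pt N N₀ N₁ := (z.1, z.2.1, z.2.2.1, fun i n => relu (preact X z i n)) with hz'
  have hmem : z' ∈ Omega1 X := fun i n => rfl
  have hdist : distPt z z' = Real.sqrt (∑ i, ∑ n, (d i n) ^ 2) := by
    simp [distPt, normPt, sqnormPt, hz', hd, Prod.sub_def, Matrix.sub_apply, Pi.sub_apply]; rfl
  have hsum : Real.sqrt (∑ i, ∑ n, (d i n) ^ 2) ≤ ∑ i, ∑ n, d i n := by
    have h1 : (∑ i, ∑ n, (d i n) ^ 2) = ∑ p : Fin N₁ × Fin N, (d p.1 p.2) ^ 2 := by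
      rw [← Finset.sum_product', Finset.univ_product_univ]
    have h2 : (∑ i, ∑ n, d i n) = ∑ p : Fin N₁ × Fin N, d p.1 p.2 := by
      rw [← Finset.sum_product', Finset.univ_product_univ]
    rw [h1, h2]
    have hle : (∑ p : Fin N₁ × Fin N, (d p.1 p.2) ^ 2) ≤
        (∑ p : Fin N₁ × Fin N, d p.1 p.2) ^ 2 :=
      Finset.sum_sq_le_sq_sum_of_nonneg (fun p _ => hdnn p.1 p.2)
    calc Real.sqrt (∑ p : Fin N₁ × Fin N, (d p.1 p.2) ^ 2)
        ≤ Real.sqrt ((∑ p : Fin N₁ × Fin N, d p.1 p.2) ^ 2) := Real.sqrt_le_sqrt hle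
      _ = |∑ p : Fin N₁ × Fin N, d p.1 p.2| := Real.sqrt_sq_eq_abs _
      _ = ∑ p : Fin N₁ × Fin N, d p.1 p.2 :=
          abs_of_nonneg (Finset.sum_nonneg fun p _ => hdnn p.1 p.2)
  have hPv : Pv β X z = β * ∑ i, ∑ n, d i n := by
    rw [Pv, Finset.sum_comm]
  have hbdd : BddBelow {r : ℝ | ∃ z' : Pt N N₀ N₁, z' ∈ Omega1 X ∧ r = distPt z z'} := by
    refine ⟨0, fun r hr => ?_⟩
    obtain ⟨w, _, rfl⟩ := hr
    exact Real.sqrt_nonneg _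
  have hinf : sInf {r : ℝ | ∃ z' : Pt N N₀ N₁, z' ∈ Omega1 X ∧ r = distPt z z'} ≤ distPt z z' :=
    csInf_le hbdd ⟨z', hmem, rfl⟩
  calc β * sInf {r : ℝ | ∃ z' : Pt N N₀ N₁, z' ∈ Omega1 X ∧ r = distPt z z'}
      ≤ β * distPt z z' := by gcongr
    _ ≤ β * ∑ i, ∑ n, d i n := by rw [hdist]; exact mul_le_mul_of_nonneg_left hsum hbeta.le
    _ = Pv β X z := hPv.symm
end
end

section
/- Suppose L_F and L_R are Lipschitz moduli of F and R on Ω_θ and β > L_F + L_R. If z̄ ∈ Ω_θ is a global minimizer of F + R over Ω₁ (i.e. z̄ ∈ Ω₁ and F(z̄) + R(z̄) ≤ F(z) + R(z) for all z ∈ Ω₁), then z̄ is a global minimizer of O over Ω₂. -/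
open scoped BigOperators

noncomputable section

variable {N N₀ N₁ : ℕ}

theorem stmt7 (N N₀ N₁ : ℕ) (hN : 0 < N) (hN₀ : 0 < N₀) (hN₁ : 0 < N₁)
    (lam₁ lam₂ β θ : ℝ) (hlam₁ : 0 < lam₁) (hlam₂ : 0 < lam₂) (hbeta : 0 < β)
    (X : Matrix (Fin N₀) (Fin N) ℝ)
    (hθ : (1 / (N : ℝ)) * ∑ j, ∑ n, (X j n) ^ 2 < θ)
    (LF LR : ℝ) (hLF : 0 ≤ LF) (hLR : 0 ≤ LR)
    (hLipF : ∀ z : Pt N N₀ N₁, z ∈ OmegaLev lam₁ lam₂ β θ X →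
      ∀ z' : Pt N N₀ N₁, z' ∈ OmegaLev lam₁ lam₂ β θ X →
        |Fv X z - Fv X z'| ≤ LF * distPt z z')
    (hLipR : ∀ z : Pt N N₀ N₁, z ∈ OmegaLev lam₁ lam₂ β θ X →
      ∀ z' : Pt N N₀ N₁, z' ∈ OmegaLev lam₁ lam₂ β θ X →
        |Rv lam₁ lam₂ z - Rv lam₁ lam₂ z'| ≤ LR * distPt z z')
    (hpen : LF + LR < β)
    (zb : Pt N N₀ N₁) (hzbLev : zb ∈ OmegaLev lam₁ lam₂ β θ X) (hzb1 : zb ∈ Omega1 X)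
    (hmin : ∀ z : Pt N N₀ N₁, z ∈ Omega1 X →
      Fv X zb + Rv lam₁ lam₂ zb ≤ Fv X z + Rv lam₁ lam₂ z) :
    zb ∈ Omega2 X ∧
    ∀ z : Pt N N₀ N₁, z ∈ Omega2 X → Ov lam₁ lam₂ β X zb ≤ Ov lam₁ lam₂ β X z := by
  refine ⟨hzbLev.1, ?_⟩
  intro z hz2
  by_cases hzθ : θ ≤ Ov lam₁ lam₂ β X z
  · exact le_trans hzbLev.2 hzθ
  push_neg at hzθ
  simp only [Omega2, Set.mem_setOf_eq] at hz2
  set v : Matrix (Fin N₁) (Fin N) ℝ := z.2.2.2 with hv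
  set vh : Matrix (Fin N₁) (Fin N) ℝ := fun i n => relu (preact X z i n) with hvh
  have hgap : ∀ i n, 0 ≤ v i n - vh i n := fun i n => sub_nonneg.2 (hz2 i n)
  set d1 : ℝ := ∑ n, ∑ i, (v i n - vh i n) with hd1def
  have hd1 : 0 ≤ d1 :=
    Finset.sum_nonneg fun n _ => Finset.sum_nonneg fun i _ => hgap i n
  set zl : ℝ → Pt N N₀ N₁ :=
    fun t => (z.1, z.2.1, z.2.2.1, fun i n => v i n - t * (v i n - vh i n)) with hzl
  have hpre : ∀ (t : ℝ) i n, preact X (zl t) i n = preact X z i n := fun t i n => rfl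
  have hterm : ∀ (t : ℝ) n i, (zl t).2.2.2 i n - relu (preact X (zl t) i n)
      = (1 - t) * (v i n - vh i n) := by
    intro t n i
    show (v i n - t * (v i n - vh i n)) - relu (preact X z i n) = _
    have h1 : relu (preact X z i n) = vh i n := rfl
    rw [h1]
    ring
  have hP : ∀ t : ℝ, Pv β X (zl t) = (1 - t) * (β * d1) := by
    intro t
    unfold Pv
    simp only [hterm, ← Finset.mul_sum]
    rw [← hd1def]
    ring
  have hmem2 : ∀ t : ℝ, 0 ≤ t → t ≤ 1 → zl t ∈ Omega2 X := by
    intro t ht0 ht1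
    simp only [Omega2, Set.mem_setOf_eq]
    intro i n
    show relu (preact X (zl t) i n) ≤ v i n - t * (v i n - vh i n)
    have h1 : relu (preact X (zl t) i n) = vh i n := rfl
    rw [h1]
    nlinarith [hgap i n]
  have hdist : ∀ t t' : ℝ, distPt (zl t) (zl t') ≤ |t - t'| * d1 := by
    intro t t'
    have hsq : sqnormPt (zl t - zl t')
        = ∑ i, ∑ n, ((t' - t) * (v i n - vh i n)) ^ 2 := by
      show (∑ i, ∑ j, (z.1 i j - z.1 i j) ^ 2) + (∑ i, (z.2.1 i - z.2.1 i) ^ 2)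
          + (∑ j, (z.2.2.1 j - z.2.2.1 j) ^ 2)
          + (∑ i, ∑ n, ((v i n - t * (v i n - vh i n))
              - (v i n - t' * (v i n - vh i n))) ^ 2) = _
      have hterm2 : ∀ i n, ((v i n - t * (v i n - vh i n))
          - (v i n - t' * (v i n - vh i n))) ^ 2
          = ((t' - t) * (v i n - vh i n)) ^ 2 := by intro i n; ring
      simp only [hterm2, sub_self]
      simp
    unfold distPt normPt
    rw [hsq]
    have hswap : (∑ i, ∑ n, ((t' - t) * (v i n - vh i n)) ^ 2)
        = (t' - t) ^ 2 * ∑ n, ∑ i, (v i n - vh i n) ^ 2 := by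
      rw [Finset.sum_comm]
      simp only [mul_pow, ← Finset.mul_sum]
    rw [hswap]
    have hS : (∑ n, ∑ i, (v i n - vh i n) ^ 2) ≤ d1 ^ 2 := by
      rw [hd1def]
      calc (∑ n, ∑ i, (v i n - vh i n) ^ 2)
          ≤ ∑ n, (∑ i, (v i n - vh i n)) ^ 2 := by
            apply Finset.sum_le_sum
            intro n _
            exact Finset.sum_sq_le_sq_sum_of_nonneg fun i _ => hgap i n
        _ ≤ (∑ n, ∑ i, (v i n - vh i n)) ^ 2 :=
            Finset.sum_sq_le_sq_sum_of_nonneg fun n _ =>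
              Finset.sum_nonneg fun i _ => hgap i n
    calc Real.sqrt ((t' - t) ^ 2 * ∑ n, ∑ i, (v i n - vh i n) ^ 2)
        ≤ Real.sqrt ((t' - t) ^ 2 * d1 ^ 2) := by
          apply Real.sqrt_le_sqrt
          exact mul_le_mul_of_nonneg_left hS (sq_nonneg _)
      _ = |t - t'| * d1 := by
          rw [show (t' - t) ^ 2 * d1 ^ 2 = ((t' - t) * d1) ^ 2 by ring,
            Real.sqrt_sq_eq_abs, abs_mul, abs_of_nonneg hd1, abs_sub_comm]
  have hlev : ∀ t : ℝ, 0 ≤ t → t ≤ 1 → Ov lam₁ lam₂ β X (zl t) ≤ θ →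
      zl t ∈ OmegaLev lam₁ lam₂ β θ X := fun t h0 h1 h2 => ⟨hmem2 t h0 h1, h2⟩
  set g : ℝ → ℝ := fun t => Ov lam₁ lam₂ β X (zl t) with hgdef
  set c : ℝ := (β - (LF + LR)) * d1 with hcdef
  have hc : 0 ≤ c := mul_nonneg (by linarith) hd1
  have hstep : ∀ t' t : ℝ, 0 ≤ t' → t' ≤ t → t ≤ 1 → g t' ≤ θ → g t ≤ θ →
      g t ≤ g t' - (t - t') * c := by
    intro t' t h0 htt h1 hθ' hθt
    have m' := hlev t' h0 (le_trans htt h1) hθ'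
    have m := hlev t (le_trans h0 htt) h1 hθt
    have hFb := hLipF _ m _ m'
    have hRb := hLipR _ m _ m'
    have hd := hdist t t'
    rw [abs_of_nonneg (by linarith : (0:ℝ) ≤ t - t')] at hd
    have hF2 : Fv X (zl t) - Fv X (zl t') ≤ LF * ((t - t') * d1) :=
      le_trans (le_trans (le_abs_self _) hFb) (mul_le_mul_of_nonneg_left hd hLF)
    have hR2 : Rv lam₁ lam₂ (zl t) - Rv lam₁ lam₂ (zl t') ≤ LR * ((t - t') * d1) :=
      le_trans (le_trans (le_abs_self _) hRb) (mul_le_mul_of_nonneg_left hd hLR)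
    have hgt_eq : g t = Fv X (zl t) + Rv lam₁ lam₂ (zl t) + (1 - t) * (β * d1) := by
      rw [hgdef]; show Ov lam₁ lam₂ β X (zl t) = _
      unfold Ov; rw [hP t]
    have hgt'_eq : g t' = Fv X (zl t') + Rv lam₁ lam₂ (zl t') + (1 - t') * (β * d1) := by
      rw [hgdef]; show Ov lam₁ lam₂ β X (zl t') = _
      unfold Ov; rw [hP t']
    have hring : (t - t') * c
        = β * ((t - t') * d1) - LF * ((t - t') * d1) - LR * ((t - t') * d1) := by
      rw [hcdef]; ring
    have hring2 : (1 - t) * (β * d1) = (1 - t') * (β * d1) - β * ((t - t') * d1) := by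
      ring
    linarith
  have hcont : Continuous g := by
    rw [hgdef]
    simp only [hzl, Ov, Fv, Rv, Pv, relu, outPre, preact]
    fun_prop
  have hz0 : zl 0 = z := by
    have h4 : (fun i n => v i n - 0 * (v i n - vh i n)) = v := by
      funext i n; ring
    show (z.1, z.2.1, z.2.2.1, fun i n => v i n - 0 * (v i n - vh i n)) = z
    rw [h4]
    rfl
  have hg0 : g 0 = Ov lam₁ lam₂ β X z := by rw [hgdef]; show Ov lam₁ lam₂ β X (zl 0) = _; rw [hz0]
  have hsub : Set.Icc (0:ℝ) 1 ⊆ {t | g t + t * c ≤ g 0} := by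
    apply IsClosed.Icc_subset_of_forall_exists_gt
    · exact (isClosed_le (by fun_prop) continuous_const).inter isClosed_Icc
    · simp
    · rintro x ⟨hxS, hx0, hx1⟩ y hy
      simp only [Set.mem_setOf_eq] at hxS
      have hxc : 0 ≤ x * c := mul_nonneg hx0 hc
      have hgx : g x < θ := by linarith
      obtain ⟨δ, hδ0, hδ⟩ := Metric.continuousAt_iff.mp hcont.continuousAt (θ - g x)
        (by linarith)
      refine ⟨min (min y (x + δ / 2)) 1, ?_, ?_, ?_⟩
      · have htx : x < min (min y (x + δ / 2)) 1 :=
          lt_min (lt_min hy (by linarith)) hx1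
        set t := min (min y (x + δ / 2)) 1 with htdef
        have ht1 : t ≤ 1 := min_le_right _ _
        have htxd : t ≤ x + δ / 2 := le_trans (min_le_left _ _) (min_le_right _ _)
        have hdtx : dist t x < δ := by
          rw [Real.dist_eq, abs_of_nonneg (by linarith)]
          linarith
        have hgt : g t < θ := by
          have := hδ hdtx
          rw [Real.dist_eq] at this
          have := le_abs_self (g t - g x)
          linarith [abs_lt.mp (hδ hdtx)]
        have := hstep x t hx0 (le_of_lt htx) ht1 (le_of_lt hgx) (le_of_lt hgt)
        have hring : (t - x) * c = t * c - x * c := by ring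
        simp only [Set.mem_setOf_eq]
        linarith
      · exact lt_min (lt_min hy (by linarith)) hx1
      · exact le_trans (min_le_left _ _) (min_le_left _ _)
  have h1S : g 1 + 1 * c ≤ g 0 := hsub ⟨zero_le_one, le_refl 1⟩
  have hzl1 : zl 1 ∈ Omega1 X := by
    simp only [Omega1, Set.mem_setOf_eq]
    intro i n
    show v i n - 1 * (v i n - vh i n) = relu (preact X (zl 1) i n)
    have h1 : relu (preact X (zl 1) i n) = vh i n := rfl
    rw [h1]; ring
  have hPzb : Pv β X zb = 0 := by
    unfold Pv
    have h0 : ∀ n i, zb.2.2.2 i n - relu (preact X zb i n) = 0 := by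
      intro n i; rw [hzb1 i n]; ring
    simp only [h0, Finset.sum_const_zero, mul_zero]
  have hg1 : g 1 = Fv X (zl 1) + Rv lam₁ lam₂ (zl 1) := by
    rw [hgdef]
    show Ov lam₁ lam₂ β X (zl 1) = _
    unfold Ov
    rw [hP 1]; ring
  have hOzb : Ov lam₁ lam₂ β X zb = Fv X zb + Rv lam₁ lam₂ zb := by
    unfold Ov; rw [hPzb]; ring
  have hm := hmin (zl 1) hzl1
  rw [hOzb]
  linarith [hg0, h1S, hc, hg1, hm]
end
end

section
/- Let δ = 3θ + 2Nθ³/(λ₁²λ₂) and Ω_δ = {z ∈ Ω₂ : O(z) ≤ δ}. Suppose L_F and L_R are Lipschitz moduli of F and R on Ω_δ, β > L_F + L_R, and β ≥ λ₁. If z̄ ∈ Ω_θ is a global minimizer of O over Ω₂, then z̄ ∈ Ω₁ and z̄ is a global minimizer of F + R over Ω₁. -/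
open scoped BigOperators

noncomputable section

variable {N N₀ N₁ : ℕ}

private lemma aux_sq_bound (A B c : ℝ) (h : |B - A| ≤ c) : B ^ 2 ≤ 2 * A ^ 2 + 2 * c ^ 2 := by
  have h1 := abs_le.1 h
  nlinarith [sq_nonneg (A - (B - A))]

theorem stmt8 (N N₀ N₁ : ℕ) (hN : 0 < N) (hN₀ : 0 < N₀) (hN₁ : 0 < N₁)
    (lam₁ lam₂ β θ : ℝ) (hlam₁ : 0 < lam₁) (hlam₂ : 0 < lam₂) (hbeta : 0 < β)
    (X : Matrix (Fin N₀) (Fin N) ℝ)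
    (hθ : (1 / (N : ℝ)) * ∑ j, ∑ n, (X j n) ^ 2 < θ)
    (δ : ℝ) (hδ : δ = 3 * θ + 2 * (N : ℝ) * θ ^ 3 / (lam₁ ^ 2 * lam₂))
    (LF LR : ℝ) (hLF : 0 ≤ LF) (hLR : 0 ≤ LR)
    (hLipF : ∀ z : Pt N N₀ N₁, z ∈ OmegaLev lam₁ lam₂ β δ X →
      ∀ z' : Pt N N₀ N₁, z' ∈ OmegaLev lam₁ lam₂ β δ X →
        |Fv X z - Fv X z'| ≤ LF * distPt z z')
    (hLipR : ∀ z : Pt N N₀ N₁, z ∈ OmegaLev lam₁ lam₂ β δ X →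
      ∀ z' : Pt N N₀ N₁, z' ∈ OmegaLev lam₁ lam₂ β δ X →
        |Rv lam₁ lam₂ z - Rv lam₁ lam₂ z'| ≤ LR * distPt z z')
    (hpen : LF + LR < β) (hbl : lam₁ ≤ β)
    (zb : Pt N N₀ N₁) (hzbLev : zb ∈ OmegaLev lam₁ lam₂ β θ X)
    (hzb2 : zb ∈ Omega2 X)
    (hmin : ∀ z : Pt N N₀ N₁, z ∈ Omega2 X → Ov lam₁ lam₂ β X zb ≤ Ov lam₁ lam₂ β X z) :
    zb ∈ Omega1 X ∧
    ∀ z : Pt N N₀ N₁, z ∈ Omega1 X →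
      Fv X zb + Rv lam₁ lam₂ zb ≤ Fv X z + Rv lam₁ lam₂ z := by
  classical
  have hNR : (1:ℝ) ≤ (N:ℝ) := by exact_mod_cast hN
  have hNpos : (0:ℝ) < (N:ℝ) := by exact_mod_cast hN
  have hθpos : 0 < θ := lt_of_le_of_lt (by positivity) hθ
  have hF0 : ∀ z : Pt N N₀ N₁, 0 ≤ Fv X z := by
    intro z; unfold Fv; positivity
  have hrelu0 : ∀ y : ℝ, 0 ≤ relu y := fun y => le_max_right _ _
  have hreluLip : ∀ a b : ℝ, |relu a - relu b| ≤ |a - b| := fun a b =>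
    abs_max_sub_max_le_abs a b 0
  have hzb2' : ∀ i n, relu (preact X zb i n) ≤ zb.2.2.2 i n := hzb2
  set S : ℝ := ∑ n, ∑ i, (zb.2.2.2 i n - relu (preact X zb i n)) with hS_def
  have hd0 : ∀ i n, 0 ≤ zb.2.2.2 i n - relu (preact X zb i n) :=
    fun i n => sub_nonneg.2 (hzb2' i n)
  have hS0 : 0 ≤ S := Finset.sum_nonneg fun n _ => Finset.sum_nonneg fun i _ => hd0 i n
  have hPzb : Pv β X zb = β * S := rfl
  set zb' : Pt N N₀ N₁ := (zb.1, zb.2.1, zb.2.2.1, fun i n => relu (preact X zb i n))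
    with hzb'_def
  have hc1 : zb'.1 = zb.1 := by rw [hzb'_def]
  have hc2 : zb'.2.1 = zb.2.1 := by rw [hzb'_def]
  have hc3 : zb'.2.2.1 = zb.2.2.1 := by rw [hzb'_def]
  have hc4 : ∀ i n, zb'.2.2.2 i n = relu (preact X zb i n) := by
    intro i n; rw [hzb'_def]
  have hpre : ∀ i n, preact X zb' i n = preact X zb i n := by
    intro i n; unfold preact; rw [hc2]
  have hzb'1 : zb' ∈ Omega1 X := by
    intro i n; rw [hc4, hpre]
  have hzb'2 : zb' ∈ Omega2 X := fun i n => le_of_eq (hzb'1 i n).symm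
  have hP' : Pv β X zb' = 0 := by
    unfold Pv
    rw [Finset.sum_eq_zero, mul_zero]
    intro n _
    exact Finset.sum_eq_zero fun i _ => by rw [hc4, hpre, sub_self]
  -- basic bounds from O(zb) ≤ θ
  have hv0 : ∀ i n, 0 ≤ zb.2.2.2 i n := fun i n => le_trans (hrelu0 _) (hzb2' i n)
  have hV0 : 0 ≤ ∑ n, ∑ i, zb.2.2.2 i n :=
    Finset.sum_nonneg fun n _ => Finset.sum_nonneg fun i _ => hv0 i n
  set Wn : ℝ := ∑ i, ∑ j, (zb.1 i j)^2 with hWn_def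
  have hWn0 : 0 ≤ Wn := Finset.sum_nonneg fun i _ => Finset.sum_nonneg fun j _ => sq_nonneg _
  have hRzb : Rv lam₁ lam₂ zb = lam₁ * (∑ n, ∑ i, zb.2.2.2 i n) + lam₂ * Wn := rfl
  have hR0 : 0 ≤ Rv lam₁ lam₂ zb := by
    rw [hRzb]; positivity
  have hOzb : Ov lam₁ lam₂ β X zb = Fv X zb + Rv lam₁ lam₂ zb + β * S := by
    unfold Ov; rw [hPzb]
  have hOθ : Fv X zb + Rv lam₁ lam₂ zb + β * S ≤ θ := by
    rw [← hOzb]; exact hzbLev.2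
  have hβS : β * S ≤ θ := by linarith [hF0 zb]
  have hFθ : Fv X zb ≤ θ := by linarith [mul_nonneg hbeta.le hS0, hR0]
  have hRθ : Rv lam₁ lam₂ zb ≤ θ := by linarith [mul_nonneg hbeta.le hS0, hF0 zb]
  have hWnθ : lam₂ * Wn ≤ θ := by
    have : 0 ≤ lam₁ * (∑ n, ∑ i, zb.2.2.2 i n) := mul_nonneg hlam₁.le hV0
    rw [hRzb] at hRθ; linarith
  have hlS : lam₁ * S ≤ θ :=
    le_trans (mul_le_mul_of_nonneg_right hbl hS0) hβS
  -- sum of squares vs square of sum for the slack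
  have hdsq : (∑ n, ∑ i, (zb.2.2.2 i n - relu (preact X zb i n))^2) ≤ S^2 := by
    calc ∑ n, ∑ i, (zb.2.2.2 i n - relu (preact X zb i n))^2
        ≤ ∑ n, (∑ i, (zb.2.2.2 i n - relu (preact X zb i n)))^2 :=
          Finset.sum_le_sum fun n _ =>
            Finset.sum_sq_le_sq_sum_of_nonneg (fun i _ => hd0 i n)
      _ ≤ S^2 :=
          Finset.sum_sq_le_sq_sum_of_nonneg
            (fun n _ => Finset.sum_nonneg fun i _ => hd0 i n)
  -- distance bound
  have hsqnorm : sqnormPt (zb - zb') = ∑ i, ∑ n, (zb.2.2.2 i n - relu (preact X zb i n))^2 := by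
    unfold sqnormPt
    rw [hzb'_def]
    simp [Prod.fst_sub, Prod.snd_sub, Pi.sub_apply, Matrix.sub_apply, sub_self]
    rfl
  have hdist : distPt zb zb' ≤ S := by
    unfold distPt normPt
    rw [hsqnorm]
    have h1 : (∑ i, ∑ n, (zb.2.2.2 i n - relu (preact X zb i n))^2) ≤ S^2 := by
      rw [Finset.sum_comm]; exact hdsq
    calc Real.sqrt (∑ i, ∑ n, (zb.2.2.2 i n - relu (preact X zb i n))^2)
        ≤ Real.sqrt (S^2) := Real.sqrt_le_sqrt h1
      _ = S := Real.sqrt_sq hS0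
  -- bound on F(zb')
  have hout : ∀ j n, |outPre zb' j n - outPre zb j n|
      ≤ ∑ i, |zb.1 i j| * (zb.2.2.2 i n - relu (preact X zb i n)) := by
    intro j n
    have he : outPre zb' j n - outPre zb j n
        = ∑ i, zb.1 i j * (relu (preact X zb i n) - zb.2.2.2 i n) := by
      unfold outPre
      simp only [hc1, hc3, hc4]
      simp only [mul_sub, Finset.sum_sub_distrib]
      ring
    rw [he]
    calc |∑ i, zb.1 i j * (relu (preact X zb i n) - zb.2.2.2 i n)|
        ≤ ∑ i, |zb.1 i j * (relu (preact X zb i n) - zb.2.2.2 i n)| :=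
          Finset.abs_sum_le_sum_abs _ _
      _ = ∑ i, |zb.1 i j| * (zb.2.2.2 i n - relu (preact X zb i n)) := by
          refine Finset.sum_congr rfl fun i _ => ?_
          rw [abs_mul]
          congr 1
          rw [abs_sub_comm, abs_of_nonneg (hd0 i n)]
  have hB : ∀ j n, (relu (outPre zb' j n) - X j n)^2
      ≤ 2*(relu (outPre zb j n) - X j n)^2
        + 2*(∑ i, |zb.1 i j| * (zb.2.2.2 i n - relu (preact X zb i n)))^2 := by
    intro j n
    have hc0 : 0 ≤ ∑ i, |zb.1 i j| * (zb.2.2.2 i n - relu (preact X zb i n)) :=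
      Finset.sum_nonneg fun i _ => mul_nonneg (abs_nonneg _) (hd0 i n)
    have he : |relu (outPre zb' j n) - relu (outPre zb j n)|
        ≤ ∑ i, |zb.1 i j| * (zb.2.2.2 i n - relu (preact X zb i n)) :=
      le_trans (hreluLip _ _) (hout j n)
    have hdiff : (relu (outPre zb' j n) - X j n) - (relu (outPre zb j n) - X j n)
        = relu (outPre zb' j n) - relu (outPre zb j n) := by ring
    exact aux_sq_bound _ _ _ (by rw [hdiff]; exact he)
  have hCS : ∀ n, ∑ j, (∑ i, |zb.1 i j| * (zb.2.2.2 i n - relu (preact X zb i n)))^2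
      ≤ Wn * (∑ i, (zb.2.2.2 i n - relu (preact X zb i n))^2) := by
    intro n
    calc ∑ j, (∑ i, |zb.1 i j| * (zb.2.2.2 i n - relu (preact X zb i n)))^2
        ≤ ∑ j, (∑ i, |zb.1 i j|^2) * (∑ i, (zb.2.2.2 i n - relu (preact X zb i n))^2) :=
          Finset.sum_le_sum fun j _ => Finset.sum_mul_sq_le_sq_mul_sq _ _ _
      _ = (∑ j, ∑ i, (zb.1 i j)^2) * (∑ i, (zb.2.2.2 i n - relu (preact X zb i n))^2) := by
          rw [← Finset.sum_mul]
          congr 1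
          exact Finset.sum_congr rfl fun j _ =>
            Finset.sum_congr rfl fun i _ => sq_abs _
      _ = Wn * (∑ i, (zb.2.2.2 i n - relu (preact X zb i n))^2) := by
          rw [hWn_def, Finset.sum_comm]
  have hc2sum : ∑ n, ∑ j, (∑ i, |zb.1 i j| * (zb.2.2.2 i n - relu (preact X zb i n)))^2
      ≤ Wn * S^2 := by
    calc ∑ n, ∑ j, (∑ i, |zb.1 i j| * (zb.2.2.2 i n - relu (preact X zb i n)))^2
        ≤ ∑ n, Wn * (∑ i, (zb.2.2.2 i n - relu (preact X zb i n))^2) :=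
          Finset.sum_le_sum fun n _ => hCS n
      _ = Wn * ∑ n, ∑ i, (zb.2.2.2 i n - relu (preact X zb i n))^2 :=
          (Finset.mul_sum _ _ _).symm
      _ ≤ Wn * S^2 := mul_le_mul_of_nonneg_left hdsq hWn0
  have hF' : Fv X zb' ≤ 2 * Fv X zb + (2/(N:ℝ)) * (Wn * S^2) := by
    unfold Fv
    have hsum : ∑ n, ∑ j, (relu (outPre zb' j n) - X j n)^2
        ≤ 2 * (∑ n, ∑ j, (relu (outPre zb j n) - X j n)^2) + 2 * (Wn * S^2) := by
      calc ∑ n, ∑ j, (relu (outPre zb' j n) - X j n)^2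
          ≤ ∑ n, ∑ j, (2*(relu (outPre zb j n) - X j n)^2
              + 2*(∑ i, |zb.1 i j| * (zb.2.2.2 i n - relu (preact X zb i n)))^2) :=
            Finset.sum_le_sum fun n _ => Finset.sum_le_sum fun j _ => hB j n
        _ = 2 * (∑ n, ∑ j, (relu (outPre zb j n) - X j n)^2)
            + 2 * (∑ n, ∑ j, (∑ i, |zb.1 i j| * (zb.2.2.2 i n - relu (preact X zb i n)))^2) := by
            simp only [Finset.sum_add_distrib, Finset.mul_sum]
        _ ≤ 2 * (∑ n, ∑ j, (relu (outPre zb j n) - X j n)^2) + 2 * (Wn * S^2) := by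
            linarith [hc2sum]
    calc (1/(N:ℝ)) * ∑ n, ∑ j, (relu (outPre zb' j n) - X j n)^2
        ≤ (1/(N:ℝ)) * (2 * (∑ n, ∑ j, (relu (outPre zb j n) - X j n)^2) + 2 * (Wn * S^2)) :=
          mul_le_mul_of_nonneg_left hsum (by positivity)
      _ = 2 * ((1/(N:ℝ)) * ∑ n, ∑ j, (relu (outPre zb j n) - X j n)^2)
          + (2/(N:ℝ)) * (Wn * S^2) := by ring
  have hR' : Rv lam₁ lam₂ zb' ≤ Rv lam₁ lam₂ zb := by
    unfold Rv
    have h1 : ∑ n, ∑ i, zb'.2.2.2 i n ≤ ∑ n, ∑ i, zb.2.2.2 i n := by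
      refine Finset.sum_le_sum fun n _ => Finset.sum_le_sum fun i _ => ?_
      rw [hc4]; exact hzb2' i n
    have h2 : (∑ i, ∑ j, (zb'.1 i j)^2) = ∑ i, ∑ j, (zb.1 i j)^2 := by rw [hc1]
    rw [h2]
    exact add_le_add (mul_le_mul_of_nonneg_left h1 hlam₁.le) le_rfl
  -- O(zb') ≤ δ
  have hkey : (2/(N:ℝ)) * (Wn * S^2) ≤ 2 * (N:ℝ) * θ^3 / (lam₁^2 * lam₂) := by
    have h2 : (lam₁*S)^2 ≤ θ^2 := by
      have := pow_le_pow_left₀ (mul_nonneg hlam₁.le hS0) hlS 2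
      simpa using this
    have h3 : (lam₂*Wn) * ((lam₁*S)^2) ≤ θ * θ^2 :=
      mul_le_mul hWnθ h2 (by positivity) hθpos.le
    have h4 : (2/(N:ℝ)) * (Wn * S^2) ≤ 2 * (Wn * S^2) := by
      have h41 : (2/(N:ℝ)) ≤ 2 := by
        rw [div_le_iff₀ hNpos]; linarith [hNR]
      exact mul_le_mul_of_nonneg_right h41 (mul_nonneg hWn0 (sq_nonneg S))
    have h5 : 2 * (Wn * S^2) ≤ 2 * (N:ℝ) * θ^3 / (lam₁^2 * lam₂) := by
      rw [le_div_iff₀ (by positivity)]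
      have e1 : 2 * (Wn * S^2) * (lam₁^2 * lam₂) = 2 * ((lam₂*Wn) * ((lam₁*S)^2)) := by ring
      have e3 : 0 ≤ ((N:ℝ)-1) * θ^3 := mul_nonneg (sub_nonneg.2 hNR) (pow_pos hθpos 3).le
      have e2 : (2:ℝ) * (θ * θ^2) ≤ 2 * (N:ℝ) * θ^3 := by ring_nf; ring_nf at e3; linarith
      rw [e1]
      calc 2 * ((lam₂*Wn) * ((lam₁*S)^2)) ≤ 2 * (θ * θ^2) := by linarith [h3]
        _ ≤ 2 * (N:ℝ) * θ^3 := e2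
    linarith
  have hOzb' : Ov lam₁ lam₂ β X zb' ≤ δ := by
    have : Ov lam₁ lam₂ β X zb' = Fv X zb' + Rv lam₁ lam₂ zb' := by
      unfold Ov; rw [hP', add_zero]
    rw [this, hδ]
    linarith [hF', hR', hFθ, hRθ, hkey]
  have hθδ : θ ≤ δ := by
    rw [hδ]
    have : 0 ≤ 2 * (N:ℝ) * θ^3 / (lam₁^2 * lam₂) := by positivity
    linarith
  have hzbδ : zb ∈ OmegaLev lam₁ lam₂ β δ X := ⟨hzb2, le_trans hzbLev.2 hθδ⟩
  have hzb'δ : zb' ∈ OmegaLev lam₁ lam₂ β δ X := ⟨hzb'2, hOzb'⟩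
  -- use minimality and Lipschitz bounds
  have hminO := hmin zb' hzb'2
  have hOzb'eq : Ov lam₁ lam₂ β X zb' = Fv X zb' + Rv lam₁ lam₂ zb' := by
    unfold Ov; rw [hP', add_zero]
  have hLf := hLipF zb hzbδ zb' hzb'δ
  have hLr := hLipR zb hzbδ zb' hzb'δ
  have hf2 : Fv X zb' - Fv X zb ≤ LF * distPt zb zb' := by
    have := neg_abs_le (Fv X zb - Fv X zb')
    linarith
  have hr2 : Rv lam₁ lam₂ zb' - Rv lam₁ lam₂ zb ≤ LR * distPt zb zb' := by
    have := neg_abs_le (Rv lam₁ lam₂ zb - Rv lam₁ lam₂ zb')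
    linarith
  have hβSle : β * S ≤ (LF + LR) * S := by
    rw [hOzb, hOzb'eq] at hminO
    have hd1 : (LF + LR) * distPt zb zb' ≤ (LF + LR) * S :=
      mul_le_mul_of_nonneg_left hdist (add_nonneg hLF hLR)
    linarith [hf2, hr2]
  have hSzero : S = 0 := by
    refine le_antisymm ?_ hS0
    by_contra h
    push_neg at h
    have := mul_lt_mul_of_pos_right hpen h
    linarith
  have hPzb0 : Pv β X zb = 0 := by rw [hPzb, hSzero, mul_zero]
  have hΩ1 : zb ∈ Omega1 X := by
    intro i n
    have h1 : ∑ n, ∑ i, (zb.2.2.2 i n - relu (preact X zb i n)) = 0 := by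
      rw [← hS_def]; exact hSzero
    have h2 := (Finset.sum_eq_zero_iff_of_nonneg (fun n _ =>
      Finset.sum_nonneg fun i _ => hd0 i n)).1 h1 n (Finset.mem_univ n)
    have h3 := (Finset.sum_eq_zero_iff_of_nonneg (fun i _ => hd0 i n)).1 h2 i (Finset.mem_univ i)
    exact sub_eq_zero.1 h3
  refine ⟨hΩ1, fun z hz => ?_⟩
  have hz2 : z ∈ Omega2 X := fun i n => (hz i n).ge
  have hPz : Pv β X z = 0 := by
    unfold Pv
    rw [Finset.sum_eq_zero, mul_zero]
    intro n _
    exact Finset.sum_eq_zero fun i _ => by rw [hz i n, sub_self]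
  have hmz := hmin z hz2
  unfold Ov at hmz
  rw [hPzb0, hPz] at hmz
  linarith
end
end

section
/- Let z̄ = (W̄, b̄₁, b̄₂, V̄) ∈ Ω₂ with O(z̄) ≤ θ and suppose β ≥ λ₁. Define V̂ by v̂ₙ = (W̄xₙ + b̄₁)₊ for n = 1,…,N. Then (1/N)∑_{n=1}^N ‖(W̄ᵀv̂ₙ + b̄₂)₊ − xₙ‖₂² + λ₁∑_{n=1}^N eᵀv̂ₙ ≤ 3θ + 2Nθ³/(λ₁²λ₂). -/
open scoped BigOperators

noncomputable section

variable {N N₀ N₁ : ℕ}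

set_option maxHeartbeats 1000000 in
theorem stmt9 (N N₀ N₁ : ℕ) (hN : 0 < N) (hN₀ : 0 < N₀) (hN₁ : 0 < N₁)
    (lam₁ lam₂ β θ : ℝ) (hlam₁ : 0 < lam₁) (hlam₂ : 0 < lam₂) (hbeta : 0 < β)
    (X : Matrix (Fin N₀) (Fin N) ℝ)
    (hθ : (1 / (N : ℝ)) * ∑ j, ∑ n, (X j n) ^ 2 < θ)
    (hbl : lam₁ ≤ β)
    (zb : Pt N N₀ N₁) (hzb : zb ∈ Omega2 X) (hzO : Ov lam₁ lam₂ β X zb ≤ θ) :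
    (1 / (N : ℝ)) * (∑ n, ∑ j,
        (relu ((∑ i, zb.1 i j * relu (preact X zb i n)) + zb.2.2.1 j) - X j n) ^ 2)
      + lam₁ * (∑ n, ∑ i, relu (preact X zb i n))
    ≤ 3 * θ + 2 * (N : ℝ) * θ ^ 3 / (lam₁ ^ 2 * lam₂) := by
  have hNpos : (0:ℝ) < N := by exact_mod_cast hN
  have hN1 : (1:ℝ) ≤ N := by exact_mod_cast hN
  have hθpos : 0 < θ := lt_of_le_of_lt (by positivity) hθ
  -- abbreviations
  set dd : Fin N₁ → Fin N → ℝ := fun i n => zb.2.2.2 i n - relu (preact X zb i n) with hdd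
  have hvh0 : ∀ i n, 0 ≤ relu (preact X zb i n) := fun i n => le_max_right _ _
  have hVge : ∀ i n, relu (preact X zb i n) ≤ zb.2.2.2 i n := fun i n => hzb i n
  have hdd0 : ∀ i n, 0 ≤ dd i n := fun i n => sub_nonneg.mpr (hVge i n)
  set S1 : ℝ := ∑ n, ∑ i, zb.2.2.2 i n with hS1
  set Wsq : ℝ := ∑ i, ∑ j, (zb.1 i j) ^ 2 with hWsq
  set D : ℝ := ∑ n, ∑ i, dd i n with hD
  have hO : Fv X zb + (lam₁ * S1 + lam₂ * Wsq) + β * D ≤ θ := hzO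
  have hF0 : 0 ≤ Fv X zb := by
    have : 0 ≤ ∑ n, ∑ j, (relu (outPre zb j n) - X j n) ^ 2 := by positivity
    unfold Fv; positivity
  have hS10 : 0 ≤ S1 :=
    Finset.sum_nonneg fun n _ => Finset.sum_nonneg fun i _ =>
      le_trans (hvh0 i n) (hVge i n)
  have hWsq0 : 0 ≤ Wsq := by positivity
  have hD0 : 0 ≤ D :=
    Finset.sum_nonneg fun n _ => Finset.sum_nonneg fun i _ => hdd0 i n
  have hmul1 : 0 ≤ lam₁ * S1 := mul_nonneg hlam₁.le hS10
  have hmul2 : 0 ≤ lam₂ * Wsq := mul_nonneg hlam₂.le hWsq0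
  have hmul3 : 0 ≤ β * D := mul_nonneg hbeta.le hD0
  have hFle : Fv X zb ≤ θ := by linarith
  have hS1le : lam₁ * S1 ≤ θ := by linarith
  have hWsqle : Wsq ≤ θ / lam₂ := by
    rw [le_div_iff₀ hlam₂]; nlinarith
  have hDle : D ≤ θ / lam₁ := by
    rw [le_div_iff₀ hlam₁]
    have : lam₁ * D ≤ β * D := mul_le_mul_of_nonneg_right hbl hD0
    nlinarith
  -- pointwise bound
  have hpt : ∀ n j,
      (relu ((∑ i, zb.1 i j * relu (preact X zb i n)) + zb.2.2.1 j) - X j n) ^ 2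
        ≤ 2 * (relu (outPre zb j n) - X j n) ^ 2
          + 2 * (∑ i, zb.1 i j * dd i n) ^ 2 := by
    intro n j
    set A : ℝ := (∑ i, zb.1 i j * relu (preact X zb i n)) + zb.2.2.1 j with hA
    have hAB : outPre zb j n - A = ∑ i, zb.1 i j * dd i n := by
      simp only [outPre, hA, hdd, mul_sub, Finset.sum_sub_distrib]
      ring
    have hlip : (relu A - relu (outPre zb j n)) ^ 2 ≤ (A - outPre zb j n) ^ 2 := by
      have h1 : |relu A - relu (outPre zb j n)| ≤ |A - outPre zb j n| :=
        abs_max_sub_max_le_abs _ _ _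
      calc (relu A - relu (outPre zb j n)) ^ 2
          = |relu A - relu (outPre zb j n)| ^ 2 := (sq_abs _).symm
        _ ≤ |A - outPre zb j n| ^ 2 := pow_le_pow_left₀ (abs_nonneg _) h1 2
        _ = (A - outPre zb j n) ^ 2 := sq_abs _
    have h2 : (∑ i, zb.1 i j * dd i n) ^ 2 = (A - outPre zb j n) ^ 2 := by
      rw [← hAB]; ring
    rw [h2]
    set u : ℝ := relu (outPre zb j n) - X j n with hu
    set v : ℝ := relu A - relu (outPre zb j n) with hv
    set w : ℝ := A - outPre zb j n with hw
    have e : relu A - X j n = u + v := by rw [hu, hv]; ring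
    rw [e]
    nlinarith [sq_nonneg (u - v), hlip]
  -- Cauchy-Schwarz per n
  have hCS : ∀ n, ∑ j, (∑ i, zb.1 i j * dd i n) ^ 2 ≤ Wsq * (∑ i, dd i n) ^ 2 := by
    intro n
    have step1 : ∀ j : Fin N₀, (∑ i, zb.1 i j * dd i n) ^ 2
        ≤ (∑ i, (zb.1 i j) ^ 2) * (∑ i, (dd i n) ^ 2) := fun j =>
      Finset.sum_mul_sq_le_sq_mul_sq _ _ _
    have step2 : ∑ i, (dd i n) ^ 2 ≤ (∑ i, dd i n) ^ 2 :=
      Finset.sum_sq_le_sq_sum_of_nonneg (fun i _ => hdd0 i n)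
    calc ∑ j, (∑ i, zb.1 i j * dd i n) ^ 2
        ≤ ∑ j, (∑ i, (zb.1 i j) ^ 2) * (∑ i, (dd i n) ^ 2) :=
          Finset.sum_le_sum fun j _ => step1 j
      _ = (∑ j, ∑ i, (zb.1 i j) ^ 2) * (∑ i, (dd i n) ^ 2) := by
          rw [Finset.sum_mul]
      _ = Wsq * (∑ i, (dd i n) ^ 2) := by rw [hWsq, Finset.sum_comm]
      _ ≤ Wsq * (∑ i, dd i n) ^ 2 := by
          apply mul_le_mul_of_nonneg_left step2 hWsq0
  have hnD : ∑ n, (∑ i, dd i n) ^ 2 ≤ D ^ 2 := by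
    rw [hD]
    exact Finset.sum_sq_le_sq_sum_of_nonneg
      (fun n _ => Finset.sum_nonneg fun i _ => hdd0 i n)
  -- main sum bound
  have hsum : ∑ n, ∑ j,
      (relu ((∑ i, zb.1 i j * relu (preact X zb i n)) + zb.2.2.1 j) - X j n) ^ 2
      ≤ 2 * (∑ n, ∑ j, (relu (outPre zb j n) - X j n) ^ 2) + 2 * Wsq * D ^ 2 := by
    calc ∑ n, ∑ j, (relu ((∑ i, zb.1 i j * relu (preact X zb i n)) + zb.2.2.1 j) - X j n) ^ 2
        ≤ ∑ n, (∑ j, (2 * (relu (outPre zb j n) - X j n) ^ 2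
            + 2 * (∑ i, zb.1 i j * dd i n) ^ 2)) :=
          Finset.sum_le_sum fun n _ => Finset.sum_le_sum fun j _ => hpt n j
      _ = ∑ n, (2 * ∑ j, (relu (outPre zb j n) - X j n) ^ 2
            + 2 * ∑ j, (∑ i, zb.1 i j * dd i n) ^ 2) := by
          apply Finset.sum_congr rfl; intro n _
          rw [Finset.sum_add_distrib, Finset.mul_sum, Finset.mul_sum]
      _ ≤ ∑ n, (2 * ∑ j, (relu (outPre zb j n) - X j n) ^ 2
            + 2 * (Wsq * (∑ i, dd i n) ^ 2)) := by
          apply Finset.sum_le_sum; intro n _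
          have := hCS n; nlinarith
      _ = 2 * (∑ n, ∑ j, (relu (outPre zb j n) - X j n) ^ 2)
            + 2 * Wsq * (∑ n, (∑ i, dd i n) ^ 2) := by
          simp only [Finset.sum_add_distrib, ← Finset.mul_sum]; ring
      _ ≤ 2 * (∑ n, ∑ j, (relu (outPre zb j n) - X j n) ^ 2) + 2 * Wsq * D ^ 2 := by
          nlinarith [hnD, hWsq0]
  -- translate to Fv
  have hFv : (1 / (N:ℝ)) * ∑ n, ∑ j, (relu (outPre zb j n) - X j n) ^ 2 = Fv X zb := rfl
  have hT1 : (1 / (N : ℝ)) * (∑ n, ∑ j,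
      (relu ((∑ i, zb.1 i j * relu (preact X zb i n)) + zb.2.2.1 j) - X j n) ^ 2)
      ≤ 2 * Fv X zb + (1 / (N:ℝ)) * (2 * Wsq * D ^ 2) := by
    have h := mul_le_mul_of_nonneg_left hsum (by positivity : (0:ℝ) ≤ 1 / (N:ℝ))
    calc (1 / (N : ℝ)) * (∑ n, ∑ j,
        (relu ((∑ i, zb.1 i j * relu (preact X zb i n)) + zb.2.2.1 j) - X j n) ^ 2)
        ≤ (1 / (N:ℝ)) * (2 * (∑ n, ∑ j, (relu (outPre zb j n) - X j n) ^ 2)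
            + 2 * Wsq * D ^ 2) := h
      _ = 2 * ((1 / (N:ℝ)) * ∑ n, ∑ j, (relu (outPre zb j n) - X j n) ^ 2)
            + (1 / (N:ℝ)) * (2 * Wsq * D ^ 2) := by ring
      _ = 2 * Fv X zb + (1 / (N:ℝ)) * (2 * Wsq * D ^ 2) := by rw [hFv]
  -- bound the remainder term
  have hWD : Wsq * D ^ 2 ≤ (θ / lam₂) * (θ / lam₁) ^ 2 := by
    have hD2 : D ^ 2 ≤ (θ / lam₁) ^ 2 := pow_le_pow_left₀ hD0 hDle 2
    have h1 : Wsq * D ^ 2 ≤ (θ / lam₂) * D ^ 2 :=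
      mul_le_mul_of_nonneg_right hWsqle (sq_nonneg D)
    have h2 : (θ / lam₂) * D ^ 2 ≤ (θ / lam₂) * (θ / lam₁) ^ 2 :=
      mul_le_mul_of_nonneg_left hD2 (by positivity)
    linarith
  have hrem : (1 / (N:ℝ)) * (2 * Wsq * D ^ 2) ≤ 2 * (N:ℝ) * θ ^ 3 / (lam₁ ^ 2 * lam₂) := by
    have hc : (θ / lam₂) * (θ / lam₁) ^ 2 = θ ^ 3 / (lam₁ ^ 2 * lam₂) := by
      field_simp
    have h1 : (1 / (N:ℝ)) * (2 * Wsq * D ^ 2) ≤ (1 / (N:ℝ)) * (2 * (θ ^ 3 / (lam₁ ^ 2 * lam₂))) := by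
      apply mul_le_mul_of_nonneg_left _ (by positivity : (0:ℝ) ≤ 1 / (N:ℝ))
      rw [← hc]; nlinarith
    have hpos : 0 ≤ θ ^ 3 / (lam₁ ^ 2 * lam₂) := by positivity
    have h2 : (1 / (N:ℝ)) ≤ (N:ℝ) := by
      calc (1 / (N:ℝ)) ≤ 1 := by rw [div_le_one hNpos]; exact hN1
        _ ≤ (N:ℝ) := hN1
    calc (1 / (N:ℝ)) * (2 * Wsq * D ^ 2)
        ≤ (1 / (N:ℝ)) * (2 * (θ ^ 3 / (lam₁ ^ 2 * lam₂))) := h1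
      _ ≤ (N:ℝ) * (2 * (θ ^ 3 / (lam₁ ^ 2 * lam₂))) := by nlinarith
      _ = 2 * (N:ℝ) * θ ^ 3 / (lam₁ ^ 2 * lam₂) := by ring
  -- second term
  have hT2 : lam₁ * (∑ n, ∑ i, relu (preact X zb i n)) ≤ θ := by
    have : (∑ n, ∑ i, relu (preact X zb i n)) ≤ S1 :=
      Finset.sum_le_sum fun n _ => Finset.sum_le_sum fun i _ => hVge i n
    calc lam₁ * (∑ n, ∑ i, relu (preact X zb i n)) ≤ lam₁ * S1 :=
          mul_le_mul_of_nonneg_left this hlam₁.le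
      _ ≤ θ := hS1le
  linarith
end
end
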